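/- arXiv:1704.02364 — 9 statements merged into one kernel-verified Lean document; each statement's English description precedes it below -/
import Mathlib

section
/- Let G = (V, E) be a finite directed graph in which every vertex has in-degree at most d (for an integer d ≥ 1), let B : V → ℕ be capacities, let u ∈ V, and let ε ∈ (0, 1/2]. Let (A_i)_{i ∈ V} be mutually independent ℕ-valued random variables on a probability space such that E[exp(ε(A_i − B_i))] ≤ ε²/(e·d) for every i ∈ V. Then the probability that there exists a rooted subtree T of G at u with ℓ_u^T(A) ≥ B_u is at most ε. -/
open MeasureTheory ProbabilityTheory

variable {V : Type*} [Fintype V] [DecidableEq V]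

/-- A rooted subtree of the finite directed graph `(V, E)` at the vertex `u`: a set `S` of
vertices containing `u` together with a next-step map `nxt` defined on `S \ {u}` (extended
arbitrarily elsewhere) following edges of `E`, from which iteration reaches `u`. -/
structure RootedSubtree (V : Type*) [Fintype V] (E : V → V → Prop) (u : V) where
  S : Finset V
  nxt : V → V
  root_mem : u ∈ S
  nxt_mem : ∀ v ∈ S, v ≠ u → nxt v ∈ S
  edge : ∀ v ∈ S, v ≠ u → E v (nxt v)
  reach : ∀ v ∈ S, ∃ n, nxt^[n] v = u

/-- The children of `v` in the rooted subtree `T` at root `u`: the nodes `w ∈ S \ {u}`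
with `nxt w = v`. -/
def subChildren {E : V → V → Prop} {u : V} (T : RootedSubtree V E u) (v : V) : Finset V :=
  T.S.filter (fun w => w ≠ u ∧ T.nxt w = v)

/-- Fuel-indexed recursion for the forwarded counts in a rooted subtree:
`F_v(a) = max(a_v + Σ_{w child of v} F_w(a) − B_v, 0)` (truncated `ℕ` subtraction realizes
the `max(·, 0)`).  Every branch of a rooted subtree has length less than `card V`, so fuel
`card V` computes the structurally recursive value. -/
def subForwardAux {E : V → V → Prop} {u : V} (T : RootedSubtree V E u)
    (B a : V → ℕ) : ℕ → V → ℕ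
  | 0, v => a v - B v
  | n + 1, v => a v + (∑ w ∈ subChildren T v, subForwardAux T B a n w) - B v

/-- The forwarded count `F_v(a)` at node `v` of the rooted subtree `T`. -/
def subForward {E : V → V → Prop} {u : V} (T : RootedSubtree V E u)
    (B a : V → ℕ) (v : V) : ℕ :=
  subForwardAux T B a (Fintype.card V) v

/-- The load `ℓ_u^T(a) = a_u + Σ_{w child of u} F_w(a)` at the root `u` of `T`. -/
def rootLoad {E : V → V → Prop} {u : V} (T : RootedSubtree V E u) (B a : V → ℕ) : ℕ :=
  a u + ∑ w ∈ subChildren T u, subForward T B a w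

attribute [local instance] Classical.propDecidable

namespace NetAux

variable {E : V → V → Prop} {u : V}

/-- descendants of `v` in `T` (paths to `v` avoiding the root `u`). -/
noncomputable def desc (T : RootedSubtree V E u) (v : V) : Finset V :=
  T.S.filter (fun x => ∃ k, T.nxt^[k] x = v ∧ ∀ j < k, T.nxt^[j] x ≠ u)

lemma desc_subset (T : RootedSubtree V E u) (v : V) : desc T v ⊆ T.S :=
  Finset.filter_subset _ _

lemma mem_desc_self {T : RootedSubtree V E u} {v : V} (hv : v ∈ T.S) : v ∈ desc T v := by
  refine Finset.mem_filter.2 ⟨hv, 0, rfl, by omega⟩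

lemma mem_subChildren {T : RootedSubtree V E u} {v w : V} :
    w ∈ subChildren T v ↔ w ∈ T.S ∧ w ≠ u ∧ T.nxt w = v := by
  simp [subChildren]

lemma mem_of_child {T : RootedSubtree V E u} {v w : V} (hw : w ∈ subChildren T v) :
    v ∈ T.S := by
  rcases mem_subChildren.1 hw with ⟨h1, h2, h3⟩
  simpa [h3] using T.nxt_mem w h1 h2

lemma iter_mem {T : RootedSubtree V E u} {x : V} (hx : x ∈ T.S) :
    ∀ k, (∀ j < k, T.nxt^[j] x ≠ u) → T.nxt^[k] x ∈ T.S := by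
  intro k
  induction k with
  | zero => intro _; simpa using hx
  | succ k ih =>
    intro h
    rw [Function.iterate_succ_apply']
    exact T.nxt_mem _ (ih fun j hj => h j (by omega)) (h k (by omega))

lemma desc_child_subset {T : RootedSubtree V E u} {v w : V} (hw : w ∈ subChildren T v) :
    desc T w ⊆ desc T v := by
  rcases mem_subChildren.1 hw with ⟨h1, h2, h3⟩
  intro x hx
  rcases Finset.mem_filter.1 hx with ⟨hxS, k, hk, hk'⟩
  refine Finset.mem_filter.2 ⟨hxS, k + 1, ?_, ?_⟩
  · rw [Function.iterate_succ_apply', hk, h3]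
  · intro j hj
    rcases Nat.lt_succ_iff_lt_or_eq.1 hj with hj | hj
    · exact hk' j hj
    · subst hj; rw [hk]; exact h2

lemma no_cycle {T : RootedSubtree V E u} {v : V} (hv : v ∈ T.S) {p : ℕ} (hp : 0 < p)
    (hcyc : T.nxt^[p] v = v) (hne : ∀ j < p, T.nxt^[j] v ≠ u) : False := by
  obtain ⟨m, hm⟩ := T.reach v hv
  have key : ∀ m, T.nxt^[m] v = T.nxt^[m % p] v := by
    intro m
    conv_lhs => rw [← Nat.mod_add_div m p, Function.iterate_add_apply]
    congr 1
    rw [Function.iterate_mul]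
    exact Function.iterate_fixed hcyc _
  rw [key] at hm
  exact hne _ (Nat.mod_lt _ hp) hm

lemma root_not_mem_desc_child {T : RootedSubtree V E u} {v w : V} (hv : v ∈ T.S)
    (hw : w ∈ subChildren T v) : v ∉ desc T w := by
  rcases mem_subChildren.1 hw with ⟨h1, h2, h3⟩
  intro hmem
  rcases Finset.mem_filter.1 hmem with ⟨-, k, hk, hk'⟩
  refine no_cycle hv (p := k + 1) (by omega) ?_ ?_
  · rw [Function.iterate_succ_apply', hk, h3]
  · intro j hj
    rcases Nat.lt_succ_iff_lt_or_eq.1 hj with hj | hj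
    · exact hk' j hj
    · subst hj; rw [hk]; exact h2

lemma card_desc_child_lt {T : RootedSubtree V E u} {v w : V} (hw : w ∈ subChildren T v) :
    (desc T w).card < (desc T v).card := by
  have hv := mem_of_child hw
  exact Finset.card_lt_card ⟨desc_child_subset hw,
    fun hsub => root_not_mem_desc_child hv hw (hsub (mem_desc_self hv))⟩

lemma not_mem_S_children {T : RootedSubtree V E u} {v : V} (hv : v ∉ T.S) :
    subChildren T v = ∅ :=
  Finset.eq_empty_iff_forall_notMem.2 fun _ hw => hv (mem_of_child hw)

lemma aux_stable {T : RootedSubtree V E u} {B a : V → ℕ} :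
    ∀ n v, (desc T v).card ≤ n →
      subForwardAux T B a (n + 1) v = subForwardAux T B a n v := by
  intro n
  induction n with
  | zero =>
    intro v hv
    have hvS : v ∉ T.S := fun h => by
      have := Finset.card_pos.2 ⟨v, mem_desc_self h⟩; omega
    have : subChildren T v = ∅ := not_mem_S_children hvS
    simp [subForwardAux, this]
  | succ n ih =>
    intro v hv
    by_cases hvS : v ∈ T.S
    · have : ∀ w ∈ subChildren T v,
          subForwardAux T B a (n + 1) w = subForwardAux T B a n w := by
        intro w hw
        exact ih w (by have := card_desc_child_lt hw; omega)
      have unf : ∀ m (w : V), subForwardAux T B a (m+1) w =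
          a w + (∑ x ∈ subChildren T w, subForwardAux T B a m x) - B w := fun _ _ => rfl
      rw [unf, unf, Finset.sum_congr rfl this]
    · have : subChildren T v = ∅ := not_mem_S_children hvS
      simp [subForwardAux, this]

lemma aux_ge {T : RootedSubtree V E u} {B a : V → ℕ} {n : ℕ} {v : V}
    (hn : (desc T v).card ≤ n) :
    ∀ m, n ≤ m → subForwardAux T B a m v = subForwardAux T B a n v := by
  intro m hm
  induction m, hm using Nat.le_induction with
  | base => rfl
  | succ m hm ih => rw [aux_stable m v (hn.trans hm), ih]

lemma subForward_eq (T : RootedSubtree V E u) (B a : V → ℕ) (v : V) :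
    subForward T B a v =
      a v + (∑ w ∈ subChildren T v, subForward T B a w) - B v := by
  have hcard : 0 < Fintype.card V := Fintype.card_pos_iff.2 ⟨u⟩
  obtain ⟨N, hN⟩ : ∃ N, Fintype.card V = N + 1 := ⟨Fintype.card V - 1, by omega⟩
  have : ∀ w ∈ subChildren T v, subForwardAux T B a N w = subForward T B a w := by
    intro w hw
    have hv := mem_of_child hw
    have hsub : desc T w ⊆ T.S.erase v := by
      intro x hx
      exact Finset.mem_erase.2 ⟨fun h => root_not_mem_desc_child hv hw (h ▸ hx),
        desc_subset T w hx⟩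
    have hcard' : (desc T w).card ≤ N := by
      have h1 := Finset.card_le_card hsub
      have h2 := Finset.card_erase_of_mem hv
      have h3 : T.S.card ≤ Fintype.card V := Finset.card_le_univ _
      omega
    have h4 := aux_ge (T := T) (B := B) (a := a) (v := w) hcard' (N + 1) (by omega)
    rw [subForward, hN]
    exact h4.symm
  have unf : ∀ m (w : V), subForwardAux T B a (m+1) w =
      a w + (∑ x ∈ subChildren T w, subForwardAux T B a m x) - B w := fun _ _ => rfl
  rw [subForward, hN, unf, Finset.sum_congr rfl this]

section Witness

variable (T : RootedSubtree V E u) (B a : V → ℕ)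

noncomputable def prunedS : Finset V :=
  T.S.filter (fun v => v = u ∨ ∃ k, T.nxt^[k] v = u ∧
    ∀ j < k, 0 < subForward T B a (T.nxt^[j] v))

noncomputable def pruned : RootedSubtree V E u where
  S := prunedS T B a
  nxt := T.nxt
  root_mem := Finset.mem_filter.2 ⟨T.root_mem, Or.inl rfl⟩
  nxt_mem := by
    intro v hv hvu
    rcases Finset.mem_filter.1 hv with ⟨hvS, h⟩
    rcases h with rfl | ⟨k, hk, hkpos⟩
    · exact absurd rfl hvu
    · obtain ⟨k', rfl⟩ : ∃ k', k = k' + 1 := by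
        cases k with
        | zero => simp at hk; exact absurd hk hvu
        | succ k' => exact ⟨_, rfl⟩
      refine Finset.mem_filter.2 ⟨T.nxt_mem v hvS hvu, Or.inr ⟨k', ?_, ?_⟩⟩
      · rw [← Function.iterate_succ_apply]; exact hk
      · intro j hj
        have := hkpos (j+1) (by omega)
        rwa [Function.iterate_succ_apply] at this
  edge := fun v hv hvu => T.edge v (Finset.mem_filter.1 hv).1 hvu
  reach := fun v hv => T.reach v (Finset.mem_filter.1 hv).1

variable {T B a}

lemma prunedS_subset : prunedS T B a ⊆ T.S := Finset.filter_subset _ _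

lemma mem_pruned_child_iff {v w : V} (hv : v ∈ prunedS T B a)
    (hw : w ∈ subChildren T v) :
    w ∈ prunedS T B a ↔ 0 < subForward T B a w := by
  rcases mem_subChildren.1 hw with ⟨hwS, hwu, hnxt⟩
  constructor
  · intro h
    rcases Finset.mem_filter.1 h with ⟨-, h⟩
    rcases h with rfl | ⟨k, hk, hkpos⟩
    · exact absurd rfl hwu
    · have hk0 : k ≠ 0 := by rintro rfl; simp at hk; exact hwu hk
      simpa using hkpos 0 (by omega)
  · intro hF
    rcases Finset.mem_filter.1 hv with ⟨hvS, h⟩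
    refine Finset.mem_filter.2 ⟨hwS, Or.inr ?_⟩
    rcases h with rfl | ⟨k, hk, hkpos⟩
    · refine ⟨1, by simpa using hnxt, ?_⟩
      intro j hj
      interval_cases j
      simpa using hF
    · refine ⟨k+1, ?_, ?_⟩
      · rw [Function.iterate_succ_apply, hnxt]; exact hk
      · intro j hj
        cases j with
        | zero => simpa using hF
        | succ j' =>
          rw [Function.iterate_succ_apply, hnxt]
          exact hkpos j' (by omega)

lemma subChildren_pruned (v : V) :
    subChildren (pruned T B a) v = (subChildren T v).filter (· ∈ prunedS T B a) := by
  ext w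
  constructor
  · intro h
    rcases mem_subChildren.1 h with ⟨h1, h2, h3⟩
    exact Finset.mem_filter.2 ⟨mem_subChildren.2 ⟨prunedS_subset h1, h2, h3⟩, h1⟩
  · intro h
    rcases Finset.mem_filter.1 h with ⟨h1, h2⟩
    rcases mem_subChildren.1 h1 with ⟨-, h3, h4⟩
    exact mem_subChildren.2 ⟨h2, h3, h4⟩

lemma pruned_subForward :
    ∀ n, ∀ v ∈ prunedS T B a, (desc T v).card ≤ n →
      subForward (pruned T B a) B a v = subForward T B a v := by
  intro n
  induction n with
  | zero =>
    intro v hv h0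
    have : v ∈ desc T v := mem_desc_self (prunedS_subset hv)
    have := Finset.card_pos.2 ⟨v, this⟩
    omega
  | succ n ih =>
    intro v hv hcard
    rw [subForward_eq (pruned T B a), subForward_eq T]
    have hsum : ∑ w ∈ subChildren (pruned T B a) v, subForward (pruned T B a) B a w
        = ∑ w ∈ subChildren T v, subForward T B a w := by
      have hstep1 : ∀ w ∈ subChildren (pruned T B a) v,
          subForward (pruned T B a) B a w = subForward T B a w := by
        intro w hw
        rw [subChildren_pruned] at hw
        rcases Finset.mem_filter.1 hw with ⟨hw1, hw2⟩
        exact ih w hw2 (by have := card_desc_child_lt hw1; omega)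
      rw [Finset.sum_congr rfl hstep1, subChildren_pruned]
      refine Finset.sum_subset (Finset.filter_subset _ _) ?_
      intro w hw hw'
      have : w ∉ prunedS T B a := fun h => hw' (Finset.mem_filter.2 ⟨hw, h⟩)
      have := (mem_pruned_child_iff hv hw).not.1 this
      omega
    rw [hsum]

lemma pruned_rootLoad : rootLoad (pruned T B a) B a = rootLoad T B a := by
  unfold rootLoad
  congr 1
  have hu : u ∈ prunedS T B a := (pruned T B a).root_mem
  have hstep1 : ∀ w ∈ subChildren (pruned T B a) u,
      subForward (pruned T B a) B a w = subForward T B a w := by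
    intro w hw
    rw [subChildren_pruned] at hw
    rcases Finset.mem_filter.1 hw with ⟨hw1, hw2⟩
    exact pruned_subForward _ w hw2 le_rfl
  rw [Finset.sum_congr rfl hstep1, subChildren_pruned]
  refine Finset.sum_subset (Finset.filter_subset _ _) ?_
  intro w hw hw'
  have : w ∉ prunedS T B a := fun h => hw' (Finset.mem_filter.2 ⟨hw, h⟩)
  have := (mem_pruned_child_iff hu hw).not.1 this
  omega

lemma pruned_pos : ∀ v ∈ prunedS T B a, v ≠ u →
    0 < subForward (pruned T B a) B a v := by
  intro v hv hvu
  rw [pruned_subForward _ v hv le_rfl]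
  rcases Finset.mem_filter.1 hv with ⟨hvS, h⟩
  rcases h with rfl | ⟨k, hk, hkpos⟩
  · exact absurd rfl hvu
  · have hk0 : k ≠ 0 := by rintro rfl; simp at hk; exact hvu hk
    simpa using hkpos 0 (by omega)

lemma sum_B_le_sum_a (T' : RootedSubtree V E u)
    (hpos : ∀ v ∈ T'.S, v ≠ u → 0 < subForward T' B a v)
    (hroot : B u ≤ rootLoad T' B a) :
    ∑ v ∈ T'.S, B v ≤ ∑ v ∈ T'.S, a v := by
  set F := subForward T' B a with hFdef
  have hi : ∀ v ∈ T'.S.erase u,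
      B v + F v = a v + ∑ w ∈ subChildren T' v, F w := by
    intro v hv
    rcases Finset.mem_erase.1 hv with ⟨hvu, hvS⟩
    have hFv := hpos v hvS hvu
    have hF := subForward_eq T' B a v
    rw [← hFdef] at hF
    omega
  -- double sum identity
  have hfiber : ∀ v : V, subChildren T' v = (T'.S.erase u).filter (fun w => T'.nxt w = v) := by
    intro v
    ext w
    simp only [mem_subChildren, Finset.mem_filter, Finset.mem_erase]
    tauto
  have hii : ∑ v ∈ T'.S, ∑ w ∈ subChildren T' v, F w = ∑ w ∈ T'.S.erase u, F w := by
    rw [Finset.sum_congr rfl (fun v _ => by rw [hfiber v])]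
    exact Finset.sum_fiberwise_of_maps_to
      (fun w hw => T'.nxt_mem w (Finset.mem_erase.1 hw).2 (Finset.mem_erase.1 hw).1) F
  have hiii : ∀ g : V → ℕ, ∑ v ∈ T'.S, g v = g u + ∑ v ∈ T'.S.erase u, g v :=
    fun g => (Finset.add_sum_erase _ g T'.root_mem).symm
  have key : ∑ v ∈ T'.S, (a v + ∑ w ∈ subChildren T' v, F w)
      = (∑ v ∈ T'.S, a v) + ∑ w ∈ T'.S.erase u, F w := by
    rw [Finset.sum_add_distrib, hii]
  have key2 : ∑ v ∈ T'.S, (a v + ∑ w ∈ subChildren T' v, F w)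
      = rootLoad T' B a + ((∑ v ∈ T'.S.erase u, B v) + ∑ v ∈ T'.S.erase u, F v) := by
    rw [hiii (fun v => a v + ∑ w ∈ subChildren T' v, F w)]
    congr 1
    rw [← Finset.sum_add_distrib]
    exact (Finset.sum_congr rfl hi).symm
  have hBsum : ∑ v ∈ T'.S, B v = B u + ∑ v ∈ T'.S.erase u, B v := hiii B
  have hasum := hiii a
  omega

lemma exists_witness (T : RootedSubtree V E u) (B a : V → ℕ)
    (h : B u ≤ rootLoad T B a) :
    ∃ T' : RootedSubtree V E u, ∑ v ∈ T'.S, B v ≤ ∑ v ∈ T'.S, a v :=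
  ⟨pruned T B a, sum_B_le_sum_a _ pruned_pos (by rw [pruned_rootLoad]; exact h)⟩

end Witness


/-! ### Counting rooted subtrees -/

inductive Tr (E : V → V → Prop) : ℕ → V → Finset V → Prop
  | node {n : ℕ} {v : V} (C : Finset V) (f : V → Finset V)
      (hE : ∀ w ∈ C, E w v)
      (hf : ∀ w ∈ C, Tr E n w (f w))
      (hdisj : ∀ w ∈ C, ∀ w' ∈ C, w ≠ w' → Disjoint (f w) (f w'))
      (hv : v ∉ C.biUnion f) :
      Tr E (n + 1) v (insert v (C.biUnion f))

lemma tr_mem {E : V → V → Prop} {n : ℕ} {v : V} {S : Finset V} (h : Tr E n v S) : v ∈ S := by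
  cases h with
  | node C f hE hf hdisj hv => exact Finset.mem_insert_self _ _

lemma tr_mono {E : V → V → Prop} {n : ℕ} {v : V} {S : Finset V} (h : Tr E n v S) :
    Tr E (n + 1) v S := by
  induction h with
  | node C f hE hf hdisj hv ih => exact Tr.node C f hE (fun w hw => ih w hw) hdisj hv

lemma tr_le {E : V → V → Prop} {n m : ℕ} (hnm : n ≤ m) {v : V} {S : Finset V}
    (h : Tr E n v S) : Tr E m v S := by
  induction m, hnm using Nat.le_induction with
  | base => exact h
  | succ m hm ih => exact tr_mono ih

section TreeDecomp

variable {E : V → V → Prop} {u : V}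

noncomputable def descTree (T : RootedSubtree V E u) (w : V) (hw : w ∈ T.S) :
    RootedSubtree V E w where
  S := desc T w
  nxt := T.nxt
  root_mem := mem_desc_self hw
  nxt_mem := by
    intro x hx hxw
    rcases Finset.mem_filter.1 hx with ⟨hxS, k, hk, hk'⟩
    obtain ⟨k', rfl⟩ : ∃ k', k = k' + 1 := by
      cases k with
      | zero => simp at hk; exact absurd hk hxw
      | succ k' => exact ⟨_, rfl⟩
    have hxu : x ≠ u := by simpa using hk' 0 (by omega)
    refine Finset.mem_filter.2 ⟨T.nxt_mem x hxS hxu, k', ?_, ?_⟩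
    · rw [← Function.iterate_succ_apply]; exact hk
    · intro j hj
      have := hk' (j + 1) (by omega)
      rwa [Function.iterate_succ_apply] at this
  edge := by
    intro x hx hxw
    rcases Finset.mem_filter.1 hx with ⟨hxS, k, hk, hk'⟩
    have hk0 : k ≠ 0 := by rintro rfl; simp at hk; exact hxw hk
    have hxu : x ≠ u := by simpa using hk' 0 (by omega)
    exact T.edge x hxS hxu
  reach := by
    intro x hx
    rcases Finset.mem_filter.1 hx with ⟨hxS, k, hk, hk'⟩
    exact ⟨k, hk⟩

lemma desc_disjoint {T : RootedSubtree V E u} {w w' : V}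
    (hw : w ∈ subChildren T u) (hw' : w' ∈ subChildren T u) (hne : w ≠ w') :
    Disjoint (desc T w) (desc T w') := by
  have key : ∀ y y' : V, y ∈ subChildren T u → y' ∈ subChildren T u →
      ∀ (x : V) (k k' : ℕ), k ≤ k' → T.nxt^[k] x = y → T.nxt^[k'] x = y' →
        (∀ j < k', T.nxt^[j] x ≠ u) → y = y' := by
    intro y y' hy hy' x k k' hle hk hk' hcond
    rcases mem_subChildren.1 hy with ⟨hyS, hyu, hyn⟩
    rcases mem_subChildren.1 hy' with ⟨hy'S, hy'u, hy'n⟩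
    rcases Nat.lt_or_ge k k' with hlt | hge
    · have h1 : T.nxt^[k + 1] x = u := by rw [Function.iterate_succ_apply', hk, hyn]
      rcases Nat.lt_or_ge (k + 1) k' with h2 | h2
      · exact absurd h1 (hcond _ h2)
      · have h3 : k + 1 = k' := by omega
        rw [h3, hk'] at h1
        exact absurd h1 hy'u
    · have h3 : k = k' := by omega
      rw [h3, hk'] at hk
      exact hk.symm
  rw [Finset.disjoint_left]
  intro x hx hx'
  rcases Finset.mem_filter.1 hx with ⟨hxS, k, hk, hkc⟩
  rcases Finset.mem_filter.1 hx' with ⟨-, k', hk', hkc'⟩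
  rcases le_total k k' with h | h
  · exact hne (key w w' hw hw' x k k' h hk hk' hkc')
  · exact hne (key w' w hw' hw x k' k h hk' hk hkc).symm

lemma exists_tr (E : V → V → Prop) :
    ∀ (n : ℕ) (v : V) (T : RootedSubtree V E v), T.S.card ≤ n → Tr E n v T.S := by
  intro n
  induction n with
  | zero =>
    intro v T h
    have := Finset.card_pos.2 ⟨v, T.root_mem⟩
    omega
  | succ n ih =>
    intro v T hcard
    have hS : T.S = insert v ((subChildren T v).biUnion (fun w => desc T w)) := by
      ext x
      simp only [Finset.mem_insert, Finset.mem_biUnion]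
      constructor
      · intro hx
        by_cases hxv : x = v
        · exact Or.inl hxv
        · right
          have hex : ∃ m, T.nxt^[m] x = v := T.reach x hx
          have hm0spec : T.nxt^[Nat.find hex] x = v := Nat.find_spec hex
          have hm0min : ∀ j < Nat.find hex, T.nxt^[j] x ≠ v :=
            fun j hj => Nat.find_min hex hj
          have hm0pos : 0 < Nat.find hex := by
            rcases Nat.eq_zero_or_pos (Nat.find hex) with h | h
            · rw [h] at hm0spec; simp at hm0spec; exact absurd hm0spec hxv
            · exact h
          obtain ⟨m1, hm1⟩ : ∃ m1, Nat.find hex = m1 + 1 := ⟨Nat.find hex - 1, by omega⟩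
          refine ⟨T.nxt^[m1] x, ?_, ?_⟩
          · refine mem_subChildren.2 ⟨iter_mem hx m1 (fun j hj => hm0min j (by omega)),
              hm0min m1 (by omega), ?_⟩
            rw [← Function.iterate_succ_apply' T.nxt m1 x]
            rw [show m1.succ = m1 + 1 from rfl, ← hm1]; exact hm0spec
          · exact Finset.mem_filter.2 ⟨hx, m1, rfl, fun j hj => hm0min j (by omega)⟩
      · rintro (rfl | ⟨w, hw, hx⟩)
        · exact T.root_mem
        · exact desc_subset T w hx
    rw [hS]
    refine Tr.node _ _ (fun w hw => ?_) (fun w hw => ?_)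
      (fun w hw w' hw' hne => desc_disjoint hw hw' hne) ?_
    · rcases mem_subChildren.1 hw with ⟨h1, h2, h3⟩
      have := T.edge w h1 h2
      rwa [h3] at this
    · have hwS := (mem_subChildren.1 hw).1
      have hsub : desc T w ⊆ T.S.erase v := by
        intro x hx
        exact Finset.mem_erase.2 ⟨fun h => root_not_mem_desc_child T.root_mem hw (h ▸ hx),
          desc_subset T w hx⟩
      have hcard' : (desc T w).card ≤ n := by
        have h1 := Finset.card_le_card hsub
        have h2 := Finset.card_erase_of_mem T.root_mem
        omega
      exact ih w (descTree T w hwS) hcard'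
    · intro hmem
      rcases Finset.mem_biUnion.1 hmem with ⟨w, hw, hv⟩
      exact root_not_mem_desc_child T.root_mem hw hv

end TreeDecomp

section Counting

lemma tr_sum_le (E : V → V → Prop) (q c : ℝ) (hq : 0 ≤ q) (hc : 0 ≤ c) (d : ℕ)
    (hdeg : ∀ v : V, (Finset.univ.filter (fun w => E w v)).card ≤ d)
    (hstep : q * (1 + c) ^ d ≤ c) :
    ∀ (n : ℕ) (v : V),
      ∑ S ∈ Finset.univ.filter (fun S : Finset V => Tr E n v S), q ^ S.card ≤ c := by
  intro n
  induction n with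
  | zero =>
    intro v
    have hempty : Finset.univ.filter (fun S : Finset V => Tr E 0 v S) = ∅ := by
      refine Finset.eq_empty_iff_forall_notMem.2 (fun S hS => ?_)
      have h := (Finset.mem_filter.1 hS).2
      cases h
    rw [hempty]
    simpa using hc
  | succ n ih =>
    intro v
    have hNv : ∀ w : V, E w v → w ∈ Finset.univ.filter (fun w => E w v) :=
      fun w hw => Finset.mem_filter.2 ⟨Finset.mem_univ _, hw⟩
    set Nv : Finset V := Finset.univ.filter (fun w => E w v) with hNvdef
    set t : V → Finset (Finset V) := fun w =>
      if w ∈ Nv then insert ∅ (Finset.univ.filter (fun S : Finset V => Tr E n w S))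
      else {∅} with htdef
    set filt : Finset (Finset V) :=
      Finset.univ.filter (fun S : Finset V => Tr E (n+1) v S) with hfiltdef
    have key : ∀ S ∈ filt,
        ∃ g : V → Finset V, g ∈ Fintype.piFinset t ∧ (q ^ S.card = q * ∏ w : V, q ^ (g w).card ∧
          S = insert v (Finset.univ.biUnion g)) := by
      intro S hS
      have hS' : Tr E (n+1) v S := (Finset.mem_filter.1 hS).2
      obtain ⟨C, f, hE, hf, hdisj, hvn, hSeq⟩ :
          ∃ (C : Finset V) (f : V → Finset V),
            (∀ w ∈ C, E w v) ∧ (∀ w ∈ C, Tr E n w (f w)) ∧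
            (∀ w ∈ C, ∀ w' ∈ C, w ≠ w' → Disjoint (f w) (f w')) ∧ (v ∉ C.biUnion f) ∧
            S = insert v (C.biUnion f) := by
        cases hS' with
        | node C f hE hf hdisj hv => exact ⟨C, f, hE, hf, hdisj, hv, rfl⟩
      refine ⟨fun w => if w ∈ C then f w else ∅, ?_, ?_, ?_⟩
      · rw [Fintype.mem_piFinset]
        intro w
        by_cases hw : w ∈ C
        · have hwN : w ∈ Nv := hNv w (hE w hw)
          simp only [htdef, if_pos hw, if_pos hwN]
          exact Finset.mem_insert_of_mem (Finset.mem_filter.2 ⟨Finset.mem_univ _, hf w hw⟩)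
        · simp only [htdef, if_neg hw]
          by_cases hwN : w ∈ Nv <;> simp [hwN]
      · have hub : ∏ w : V, q ^ (if w ∈ C then f w else ∅).card
            = ∏ w ∈ C, q ^ (f w).card := by
          rw [← Finset.prod_subset (Finset.subset_univ C)
            (fun x _ hx => by simp [if_neg hx])]
          exact Finset.prod_congr rfl (fun w hw => by rw [if_pos hw])
        rw [hub, Finset.prod_pow_eq_pow_sum, hSeq, Finset.card_insert_of_notMem hvn,
          Finset.card_biUnion hdisj, pow_succ, mul_comm]
      · rw [hSeq]
        congr 1
        ext x
        simp only [Finset.mem_biUnion, Finset.mem_univ, true_and]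
        constructor
        · rintro ⟨w, hw, hx⟩
          exact ⟨w, by rw [if_pos hw]; exact hx⟩
        · rintro ⟨w, hx⟩
          by_cases hw : w ∈ C
          · rw [if_pos hw] at hx; exact ⟨w, hw, hx⟩
          · rw [if_neg hw] at hx; exact absurd hx (Finset.notMem_empty x)
    choose g hg1 hg2 hg3 using key
    have hinj : ∀ x ∈ filt.attach, ∀ y ∈ filt.attach,
        g x.1 x.2 = g y.1 y.2 → x = y := by
      intro x _ y _ hxy
      refine Subtype.ext ?_
      rw [hg3 x.1 x.2, hg3 y.1 y.2, hxy]
    have hsum1 : ∑ S ∈ filt, q ^ S.card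
        = ∑ x ∈ filt.attach, (q * ∏ w : V, q ^ (g x.1 x.2 w).card) := by
      rw [← Finset.sum_attach filt (fun S => q ^ S.card)]
      exact Finset.sum_congr rfl (fun x _ => hg2 x.1 x.2)
    have hsum2 : ∑ x ∈ filt.attach, (q * ∏ w : V, q ^ (g x.1 x.2 w).card)
        ≤ ∑ y ∈ Fintype.piFinset t, (q * ∏ w : V, q ^ (y w).card) := by
      have him := Finset.sum_image (s := filt.attach) (f := fun y : V → Finset V =>
        q * ∏ w : V, q ^ (y w).card) hinj
      refine le_trans (le_of_eq him.symm) ?_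
      refine Finset.sum_le_sum_of_subset_of_nonneg ?_ (fun y _ _ => by positivity)
      intro y hy
      rcases Finset.mem_image.1 hy with ⟨x, hx, rfl⟩
      exact hg1 x.1 x.2
    have hsum3 : ∑ y ∈ Fintype.piFinset t, (q * ∏ w : V, q ^ (y w).card)
        = q * ∏ w : V, ∑ s ∈ t w, q ^ s.card := by
      rw [← Finset.mul_sum, Finset.prod_univ_sum]
    have hfac : ∀ w : V, ∑ s ∈ t w, q ^ s.card ≤ if w ∈ Nv then 1 + c else 1 := by
      intro w
      by_cases hw : w ∈ Nv
      · simp only [htdef, if_pos hw]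
        have hne : (∅ : Finset V) ∉
            Finset.univ.filter (fun S : Finset V => Tr E n w S) := by
          intro h
          exact absurd (tr_mem (Finset.mem_filter.1 h).2) (Finset.notMem_empty w)
        rw [Finset.sum_insert hne]
        have := ih w
        simp only [Finset.card_empty, pow_zero]
        linarith
      · simp only [htdef, if_neg hw]
        simp
    have hsum4 : q * ∏ w : V, (∑ s ∈ t w, q ^ s.card) ≤ q * (1 + c) ^ Nv.card := by
      have h1 : ∏ w : V, (∑ s ∈ t w, q ^ s.card)
          ≤ ∏ w : V, (if w ∈ Nv then 1 + c else 1) :=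
        Finset.prod_le_prod (fun w _ => Finset.sum_nonneg (fun s _ => by positivity))
          (fun w _ => hfac w)
      have h2 : ∏ w : V, (if w ∈ Nv then 1 + c else 1) = (1 + c) ^ Nv.card := by
        rw [Finset.prod_ite_mem, Finset.univ_inter, Finset.prod_const]
      exact mul_le_mul_of_nonneg_left (h1.trans_eq h2) hq
    have hsum5 : q * (1 + c) ^ Nv.card ≤ q * (1 + c) ^ d :=
      mul_le_mul_of_nonneg_left (pow_le_pow_right₀ (by linarith) (hdeg v)) hq
    calc ∑ S ∈ filt, q ^ S.card
        ≤ q * ∏ w : V, ∑ s ∈ t w, q ^ s.card := by rw [hsum1, ← hsum3]; exact hsum2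
      _ ≤ q * (1 + c) ^ Nv.card := hsum4
      _ ≤ q * (1 + c) ^ d := hsum5
      _ ≤ c := hstep

lemma sum_over_trees_le (E : V → V → Prop) (u : V) (q c : ℝ) (hq : 0 ≤ q) (hc : 0 ≤ c)
    (d : ℕ) (hdeg : ∀ v : V, (Finset.univ.filter (fun w => E w v)).card ≤ d)
    (hstep : q * (1 + c) ^ d ≤ c) :
    ∑ S ∈ Finset.univ.filter
      (fun S : Finset V => ∃ T : RootedSubtree V E u, T.S = S), q ^ S.card ≤ c := by
  refine le_trans (Finset.sum_le_sum_of_subset_of_nonneg ?_ (fun S _ _ => by positivity))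
    (tr_sum_le E q c hq hc d hdeg hstep (Fintype.card V) u)
  intro S hS
  rcases Finset.mem_filter.1 hS with ⟨-, T, rfl⟩
  refine Finset.mem_filter.2 ⟨Finset.mem_univ _, ?_⟩
  exact tr_le (Finset.card_le_univ _) (exists_tr E T.S.card u T le_rfl)

end Counting

end NetAux

set_option maxHeartbeats 800000 in
/-- Let `(V, E)` be a finite directed graph in which every vertex has
in-degree at most `d ≥ 1`, let `B` be capacities, `u ∈ V` and `ε ∈ (0, 1/2]`.  If
`(A_i)_{i ∈ V}` are mutually independent `ℕ`-valued random variables with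
`E[exp(ε(A_i − B_i))] ≤ ε²/(e·d)` for every `i`, then the probability that some rooted
subtree `T` of `G` at `u` has `ℓ_u^T(A) ≥ B_u` is at most `ε`. -/
theorem network_overload_prob_le
    {Ω : Type*} [MeasurableSpace Ω] (μ : Measure Ω) [IsProbabilityMeasure μ]
    (E : V → V → Prop) (d : ℕ) (hd : 1 ≤ d)
    (hindeg : ∀ v : V, {w : V | E w v}.ncard ≤ d)
    (B : V → ℕ) (u : V) (ε : ℝ) (hε0 : 0 < ε) (hε : ε ≤ 1 / 2)
    (A : V → Ω → ℕ) (hAmeas : ∀ i, Measurable (A i))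
    (hindep : iIndepFun A μ)
    (hmgf : ∀ i, ∫⁻ ω, ENNReal.ofReal (Real.exp (ε * ((A i ω : ℝ) - (B i : ℝ)))) ∂μ ≤
      ENNReal.ofReal (ε ^ 2 / (Real.exp 1 * d))) :
    μ {ω | ∃ T : RootedSubtree V E u, B u ≤ rootLoad T B (fun i => A i ω)} ≤
      ENNReal.ofReal ε := by
  classical
  have hd0 : (0:ℝ) < d := by exact_mod_cast Nat.lt_of_lt_of_le Nat.zero_lt_one hd
  set q : ℝ := ε ^ 2 / (Real.exp 1 * d) with hqdef
  have hq : 0 ≤ q := by positivity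
  set c : ℝ := Real.exp 1 * q with hcdef
  have hc : 0 ≤ c := by positivity
  have hcd : c * d = ε ^ 2 := by
    rw [hcdef, hqdef]
    field_simp
  have hε2 : ε ^ 2 ≤ 1 := by nlinarith
  have hstep : q * (1 + c) ^ d ≤ c := by
    have h1 : (1 + c) ≤ Real.exp c := by
      have := Real.add_one_le_exp c
      linarith
    have h2 : (1 + c) ^ d ≤ (Real.exp c) ^ d := pow_le_pow_left₀ (by linarith) h1 d
    have h3 : (Real.exp c) ^ d = Real.exp (c * d) := by
      rw [← Real.exp_nat_mul, mul_comm]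
    have h4 : Real.exp (c * d) ≤ Real.exp 1 := by
      rw [hcd]
      exact Real.exp_le_exp.2 hε2
    calc q * (1 + c) ^ d ≤ q * Real.exp 1 := by
          refine mul_le_mul_of_nonneg_left ?_ hq
          rw [← h3] at h4
          exact h2.trans h4
      _ = c := by rw [hcdef, mul_comm]
  have hcε : c ≤ ε := by
    have h5 : c = ε ^ 2 / d := by
      field_simp at hcd ⊢
      linarith
    rw [h5]
    have h6 : ε ^ 2 / (d:ℝ) ≤ ε ^ 2 := by
      apply div_le_self (by positivity)
      exact_mod_cast hd
    nlinarith
  have hdeg' : ∀ v : V, (Finset.univ.filter (fun w => E w v)).card ≤ d := by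
    intro v
    have := hindeg v
    rwa [Set.ncard_eq_toFinset_card', Set.toFinset_setOf] at this
  -- the real-valued recentred variables
  set X : V → Ω → ℝ := fun i ω => (A i ω : ℝ) - B i with hX
  have hXmeas : ∀ i, Measurable (X i) := fun i =>
    ((measurable_of_countable _).comp (hAmeas i)).sub measurable_const
  have hXindep : iIndepFun X μ :=
    hindep.comp (fun i => fun n : ℕ => (n:ℝ) - B i) (fun i => measurable_of_countable _)
  have hXint : ∀ i, Integrable (fun ω => Real.exp (ε * X i ω)) μ := by
    intro i
    have hm : Measurable fun ω => Real.exp (ε * X i ω) :=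
      ((hXmeas i).const_mul ε).exp
    refine ⟨hm.aestronglyMeasurable, ?_⟩
    rw [hasFiniteIntegral_iff_ofReal (ae_of_all _ (fun ω => (Real.exp_pos _).le))]
    exact lt_of_le_of_lt (hmgf i) ENNReal.ofReal_lt_top
  have hXmgf : ∀ i, mgf (X i) μ ε ≤ q := by
    intro i
    have him : mgf (X i) μ ε = (∫⁻ ω, ENNReal.ofReal (Real.exp (ε * X i ω)) ∂μ).toReal := by
      rw [mgf, integral_eq_lintegral_of_nonneg_ae (ae_of_all _ fun ω => (Real.exp_pos _).le)
        ((hXmeas i).const_mul ε).exp.aestronglyMeasurable]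
    rw [him]
    calc (∫⁻ ω, ENNReal.ofReal (Real.exp (ε * X i ω)) ∂μ).toReal
        ≤ (ENNReal.ofReal q).toReal :=
          ENNReal.toReal_mono ENNReal.ofReal_ne_top (hmgf i)
      _ = q := ENNReal.toReal_ofReal hq
  have hcher : ∀ S : Finset V,
      μ {ω | (∑ v ∈ S, B v) ≤ ∑ v ∈ S, A v ω} ≤ ENNReal.ofReal (q ^ S.card) := by
    intro S
    have hsub : {ω | (∑ v ∈ S, B v) ≤ ∑ v ∈ S, A v ω}
        ⊆ {ω | (0:ℝ) ≤ (∑ i ∈ S, X i) ω} := by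
      intro ω hω
      simp only [Set.mem_setOf_eq] at hω ⊢
      rw [Finset.sum_apply]
      have heq : ∀ i ∈ S, X i ω = (A i ω : ℝ) - B i := fun _ _ => rfl
      rw [Finset.sum_congr rfl heq, Finset.sum_sub_distrib, sub_nonneg]
      exact_mod_cast hω
    have hint : Integrable (fun ω => Real.exp (ε * (∑ i ∈ S, X i) ω)) μ :=
      hXindep.integrable_exp_mul_sum hXmeas (fun i _ => hXint i)
    have hch := measure_ge_le_exp_mul_mgf (X := ∑ i ∈ S, X i) (μ := μ) (t := ε) 0 hε0.le hint
    simp only [mul_zero, neg_zero, Real.exp_zero, one_mul] at hch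
    have hmgfprod : mgf (∑ i ∈ S, X i) μ ε = ∏ i ∈ S, mgf (X i) μ ε :=
      hXindep.mgf_sum hXmeas S
    have hprod : ∏ i ∈ S, mgf (X i) μ ε ≤ q ^ S.card := by
      calc ∏ i ∈ S, mgf (X i) μ ε ≤ ∏ _i ∈ S, q :=
            Finset.prod_le_prod (fun i _ => mgf_nonneg) (fun i _ => hXmgf i)
        _ = q ^ S.card := Finset.prod_const q
    calc μ {ω | (∑ v ∈ S, B v) ≤ ∑ v ∈ S, A v ω}
        ≤ μ {ω | (0:ℝ) ≤ (∑ i ∈ S, X i) ω} := measure_mono hsub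
      _ = ENNReal.ofReal ((μ {ω | (0:ℝ) ≤ (∑ i ∈ S, X i) ω}).toReal) :=
          (ENNReal.ofReal_toReal (measure_ne_top _ _)).symm
      _ ≤ ENNReal.ofReal (q ^ S.card) := by
          refine ENNReal.ofReal_le_ofReal ?_
          refine hch.trans ?_
          rw [hmgfprod]
          exact hprod
  set filt : Finset (Finset V) := Finset.univ.filter
    (fun S : Finset V => ∃ T : RootedSubtree V E u, T.S = S) with hfiltdef
  have hwit : {ω | ∃ T : RootedSubtree V E u, B u ≤ rootLoad T B (fun i => A i ω)}
      ⊆ ⋃ S ∈ filt, {ω | (∑ v ∈ S, B v) ≤ ∑ v ∈ S, A v ω} := by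
    intro ω hω
    rcases hω with ⟨T, hT⟩
    obtain ⟨T', hT'⟩ := NetAux.exists_witness T B (fun i => A i ω) hT
    exact Set.mem_iUnion₂.2 ⟨T'.S, Finset.mem_filter.2 ⟨Finset.mem_univ _, T', rfl⟩, hT'⟩
  calc μ {ω | ∃ T : RootedSubtree V E u, B u ≤ rootLoad T B (fun i => A i ω)}
      ≤ μ (⋃ S ∈ filt, {ω | (∑ v ∈ S, B v) ≤ ∑ v ∈ S, A v ω}) := measure_mono hwit
    _ ≤ ∑ S ∈ filt, μ {ω | (∑ v ∈ S, B v) ≤ ∑ v ∈ S, A v ω} :=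
        measure_biUnion_finset_le _ _
    _ ≤ ∑ S ∈ filt, ENNReal.ofReal (q ^ S.card) := Finset.sum_le_sum (fun S _ => hcher S)
    _ = ENNReal.ofReal (∑ S ∈ filt, q ^ S.card) :=
        (ENNReal.ofReal_sum_of_nonneg (fun S _ => by positivity)).symm
    _ ≤ ENNReal.ofReal ε := by
        refine ENNReal.ofReal_le_ofReal ?_
        refine le_trans ?_ hcε
        exact NetAux.sum_over_trees_le E u q c hq hc d hdeg' hstep
end

section
/- (Generalized decorrelation lemma.) Let n, N ≥ 1. For each k ∈ {1, …, N} let h_k : ℝⁿ → ℝ be a Borel measurable function that is nondecreasing in each coordinate (i.e., monotone with respect to the pointwise order on ℝⁿ). Let A_1, …, A_n be mutually independent real-valued random variables. For each i ∈ {1, …, n} let n_i ≥ 1 and let P_i : {1, …, N} → {1, …, n_i}. Let (A'_{i,s})_{1 ≤ i ≤ n, 1 ≤ s ≤ n_i} be a mutually independent family of random variables such that A'_{i,s} has the same distribution as A_i for every i, s. Then max_{1 ≤ k ≤ N} h_k(A'_{1,P_1(k)}, …, A'_{n,P_n(k)}) stochastically dominates max_{1 ≤ k ≤ N} h_k(A_1,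 …, A_n); that is, for every a ∈ ℝ, P(max_k h_k(A'_{1,P_1(k)}, …, A'_{n,P_n(k)}) ≤ a) ≤ P(max_k h_k(A_1, …, A_n) ≤ a). -/
open MeasureTheory ProbabilityTheory

section DecorrelationAux

lemma decorr_exists_min_chain {ι : Type*} [Fintype ι] [Nonempty ι] (M : ι → Set ℝ)
    (hc : ∀ s t, M s ⊆ M t ∨ M t ⊆ M s) : ∃ s0, ∀ s, M s0 ⊆ M s := by
  classical
  have key : ∀ t : Finset ι, t.Nonempty → ∃ s0 ∈ t, ∀ s ∈ t, M s0 ⊆ M s := by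
    intro t
    induction t using Finset.induction_on with
    | empty => intro ht; exact absurd ht (by simp)
    | insert a u ha ih =>
      intro _
      rcases u.eq_empty_or_nonempty with rfl | hu
      · exact ⟨a, by simp, fun s hs => by
          rcases Finset.mem_insert.1 hs with rfl | hs
          · exact subset_rfl
          · exact absurd hs (by simp)⟩
      · obtain ⟨s0, hs0u, hs0⟩ := ih hu
        rcases hc a s0 with hle | hle
        · refine ⟨a, Finset.mem_insert_self _ _, fun s hs => ?_⟩
          rcases Finset.mem_insert.1 hs with rfl | hs
          · exact subset_rfl
          · exact hle.trans (hs0 s hs)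
        · refine ⟨s0, Finset.mem_insert_of_mem hs0u, fun s hs => ?_⟩
          rcases Finset.mem_insert.1 hs with rfl | hs
          · exact hle
          · exact hs0 s hs
  obtain ⟨s0, _, h⟩ := key Finset.univ Finset.univ_nonempty
  exact ⟨s0, fun s => h s (Finset.mem_univ s)⟩

lemma decorr_key1 (μ0 : Measure ℝ) [IsProbabilityMeasure μ0] {M N : ℕ} [Nonempty (Fin M)]
    (I : Fin N → Set ℝ) (hIlow : ∀ k, IsLowerSet (I k))
    (Q : Fin N → Fin M) :
    Measure.pi (fun _ : Fin M => μ0) {z | ∀ k, z (Q k) ∈ I k} ≤ μ0 (⋂ k, I k) := by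
  classical
  set Ms : Fin M → Set ℝ := fun s => ⋂ k, ⋂ (_ : Q k = s), I k with hMs
  have hMsLow : ∀ s, IsLowerSet (Ms s) := fun s =>
    isLowerSet_iInter fun k => isLowerSet_iInter fun _ => hIlow k
  have hset : {z : Fin M → ℝ | ∀ k, z (Q k) ∈ I k} = Set.pi Set.univ Ms := by
    ext z
    simp only [Set.mem_setOf_eq, Set.mem_pi, Set.mem_univ, true_implies, hMs, Set.mem_iInter]
    constructor
    · intro hz s k hk; subst hk; exact hz k
    · intro hz k; exact hz (Q k) k rfl
  obtain ⟨s0, hs0⟩ := decorr_exists_min_chain Ms fun s t => (hMsLow s).total (hMsLow t)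
  have hsub : Ms s0 ⊆ ⋂ k, I k := by
    intro z hz
    refine Set.mem_iInter.2 fun k => ?_
    have h2 := hs0 (Q k) hz
    simp only [hMs, Set.mem_iInter] at h2
    exact h2 k rfl
  rw [hset, Measure.pi_pi]
  calc (∏ s, μ0 (Ms s)) ≤ μ0 (Ms s0) := by
        rw [← Finset.mul_prod_erase Finset.univ _ (Finset.mem_univ s0)]
        exact mul_le_of_le_one_right' (Finset.prod_le_one (fun _ _ => zero_le)
          (fun _ _ => prob_le_one))
    _ ≤ μ0 (⋂ k, I k) := measure_mono hsub

variable {Ω : Type*} [MeasurableSpace Ω] {μ : Measure Ω}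

lemma decorr_meas_setOf_forall_le {β : Type*} [MeasurableSpace β] {N : ℕ}
    (g : Fin N → β → ℝ) (hg : ∀ k, Measurable (g k)) (a : ℝ) :
    MeasurableSet {b | ∀ k, g k b ≤ a} := by
  have : {b | ∀ k, g k b ≤ a} = ⋂ k, (g k) ⁻¹' Set.Iic a := by
    ext b; simp [Set.mem_iInter]
  rw [this]
  exact MeasurableSet.iInter fun k => (hg k) measurableSet_Iic

lemma decorr_map_tuple [IsProbabilityMeasure μ] {ι : Type*} [Fintype ι] (f : ι → Ω → ℝ)
    (hf : ∀ i, Measurable (f i)) (hind : iIndepFun f μ) :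
    Measure.map (fun ω i => f i ω) μ = Measure.pi (fun i => Measure.map (f i) μ) := by
  haveI : ∀ i, IsProbabilityMeasure (Measure.map (f i) μ) :=
    fun i => Measure.isProbabilityMeasure_map (hf i).aemeasurable
  refine (Measure.pi_eq fun s hs => ?_).symm
  rw [Measure.map_apply (measurable_pi_lambda _ hf) (MeasurableSet.univ_pi hs)]
  have hpre : (fun ω i => f i ω) ⁻¹' (Set.pi Set.univ s) = ⋂ i, f i ⁻¹' s i := by
    ext ω; simp [Set.mem_pi]
  rw [hpre, hind.meas_iInter (fun i => ⟨s i, hs i, rfl⟩)]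
  exact Finset.prod_congr rfl fun i _ => (Measure.map_apply (hf i) (hs i)).symm

lemma decorr_map_grouped [IsProbabilityMeasure μ] (n : ℕ) (m : Fin n → ℕ)
    (A' : (i : Fin n) → Fin (m i) → Ω → ℝ)
    (hA'meas : ∀ i s, Measurable (A' i s))
    (hA'indep : iIndepFun
      (fun p : (Σ i : Fin n, Fin (m i)) => A' p.1 p.2) μ)
    (ρ : Fin n → Measure ℝ) [∀ i, IsProbabilityMeasure (ρ i)]
    (hmap : ∀ i s, Measure.map (A' i s) μ = ρ i) :
    Measure.map (fun ω (i : Fin n) (s : Fin (m i)) => A' i s ω) μ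
      = Measure.pi (fun i => Measure.pi (fun _ : Fin (m i) => ρ i)) := by
  classical
  have hBmeas : Measurable (fun ω (i : Fin n) (s : Fin (m i)) => A' i s ω) :=
    measurable_pi_lambda _ fun i => measurable_pi_lambda _ fun s => hA'meas i s
  set C : ∀ i : Fin n, Set (Set (Fin (m i) → ℝ)) := fun i =>
    Set.pi Set.univ '' Set.pi Set.univ fun _ : Fin (m i) => {s : Set ℝ | MeasurableSet s} with hC
  refine (Measure.pi_eq_generateFrom (C := C)
    (fun i => generateFrom_pi) (fun i => isPiSystem_pi)
    (fun i => ⟨fun _ => Set.univ,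
      fun _ => ⟨fun _ => Set.univ, fun _ _ => by simp, by simp⟩,
      fun _ => by simp [measure_lt_top], Set.iUnion_const _⟩) (fun s hs => ?_)).symm
  choose t ht hteq using hs
  have htm : ∀ i s', MeasurableSet (t i s') := by
    intro i s'; exact (Set.mem_univ_pi.1 (ht i)) s'
  rw [Measure.map_apply hBmeas (MeasurableSet.univ_pi (fun i => by
    rw [← hteq i]; exact MeasurableSet.univ_pi fun s' => htm i s'))]
  have hpre : (fun ω (i : Fin n) (s : Fin (m i)) => A' i s ω) ⁻¹' (Set.pi Set.univ s)
      = ⋂ p : Σ i : Fin n, Fin (m i), A' p.1 p.2 ⁻¹' t p.1 p.2 := by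
    rw [Set.iInter_sigma]
    ext ω
    simp only [Set.mem_preimage, Set.mem_pi, Set.mem_univ, true_implies, Set.mem_iInter]
    constructor
    · intro hω i s'
      have := hω i; rw [← hteq i] at this
      exact this s' (Set.mem_univ s')
    · intro hω i
      rw [← hteq i]
      exact fun s' _ => hω i s'
  rw [hpre, hA'indep.meas_iInter (fun p => ⟨t p.1 p.2, htm p.1 p.2, rfl⟩)]
  have hprod : ∀ i, Measure.pi (fun _ : Fin (m i) => ρ i) (s i) = ∏ s', ρ i (t i s') := by
    intro i; rw [← hteq i, Measure.pi_pi]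
  simp only [hprod]
  rw [← Finset.univ_sigma_univ, Finset.prod_sigma]
  refine Finset.prod_congr rfl fun i _ => Finset.prod_congr rfl fun s' _ => ?_
  rw [← hmap i s', Measure.map_apply (hA'meas i s') (htm i s')]

lemma decorr_core : ∀ (n : ℕ) (m : Fin n → ℕ), (∀ i, 1 ≤ m i) →
    ∀ (μs : Fin n → Measure ℝ), (∀ i, IsProbabilityMeasure (μs i)) →
    ∀ {N : ℕ} (h : Fin N → (Fin n → ℝ) → ℝ), (∀ k, Measurable (h k)) →
    (∀ k, Monotone (h k)) → ∀ (P : ∀ i : Fin n, Fin N → Fin (m i)) (a : ℝ),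
    Measure.pi (fun i => Measure.pi fun _ : Fin (m i) => μs i)
        {x | ∀ k, h k (fun i => x i (P i k)) ≤ a}
      ≤ Measure.pi μs {y | ∀ k, h k y ≤ a} := by
  intro n
  induction n with
  | zero =>
    intro m hm μs hμs N h hmeas hmono P a
    haveI := hμs
    have h0 : ∀ (x : ∀ i : Fin 0, Fin (m i) → ℝ) (k : Fin N),
        (fun i : Fin 0 => x i (P i k)) = (fun i : Fin 0 => i.elim0) :=
      fun x k => funext fun i => i.elim0
    have h0' : ∀ y : Fin 0 → ℝ, y = (fun i : Fin 0 => i.elim0) :=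
      fun y => funext fun i => i.elim0
    by_cases hc : ∀ k : Fin N, h k (fun i : Fin 0 => i.elim0) ≤ a
    · have e1 : {x : ∀ i : Fin 0, Fin (m i) → ℝ | ∀ k, h k (fun i => x i (P i k)) ≤ a}
          = Set.univ := Set.eq_univ_of_forall fun x k => by rw [h0 x k]; exact hc k
      have e2 : {y : Fin 0 → ℝ | ∀ k, h k y ≤ a} = Set.univ :=
        Set.eq_univ_of_forall fun y k => by rw [h0' y]; exact hc k
      rw [e1, e2, measure_univ, measure_univ]
    · have e1 : {x : ∀ i : Fin 0, Fin (m i) → ℝ | ∀ k, h k (fun i => x i (P i k)) ≤ a}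
          = (∅ : Set _) := by
        refine Set.eq_empty_of_forall_notMem fun x hx => hc fun k => ?_
        have := hx k; rwa [h0 x k] at this
      rw [e1]; simp
  | succ n ih =>
    intro m hm μs hμs N h hmeas hmono P a
    haveI := hμs
    haveI : Nonempty (Fin (m 0)) := ⟨⟨0, hm 0⟩⟩
    -- measures
    set ν0 : Measure (Fin (m 0) → ℝ) := Measure.pi fun _ => μs 0 with hν0
    set νrest : Measure (∀ j : Fin n, Fin (m j.succ) → ℝ) :=
      Measure.pi fun j => Measure.pi fun _ : Fin (m j.succ) => μs j.succ with hνrest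
    set πrest : Measure (Fin n → ℝ) := Measure.pi fun j : Fin n => μs j.succ with hπrest
    -- basic measurable functions
    have mcons : Measurable fun q : ℝ × (Fin n → ℝ) => Fin.cons (α := fun _ => ℝ) q.1 q.2 := by
      refine measurable_pi_lambda _ fun i => ?_
      refine Fin.cases ?_ ?_ i
      · simpa using measurable_fst
      · intro j; simpa [Function.comp_def] using (measurable_pi_apply j).comp measurable_snd
    have mconsc : ∀ (y : Fin n → ℝ), Measurable fun c : ℝ => Fin.cons (α := fun _ => ℝ) c y := by
      intro y
      refine measurable_pi_lambda _ fun i => ?_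
      refine Fin.cases ?_ ?_ i
      · simpa using measurable_id'
      · intro j; simpa using measurable_const
    have mconsy : ∀ (c : ℝ), Measurable fun y : Fin n → ℝ => Fin.cons (α := fun _ => ℝ) c y := by
      intro c
      refine measurable_pi_lambda _ fun i => ?_
      refine Fin.cases ?_ ?_ i
      · simpa using measurable_const
      · intro j; simpa using measurable_pi_apply j
    -- monotonicity of cons
    have consMono1 : ∀ (y : Fin n → ℝ) {c c' : ℝ}, c ≤ c' →
        Fin.cons (α := fun _ => ℝ) c y ≤ Fin.cons (α := fun _ => ℝ) c' y := by
      intro y c c' hcc i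
      refine Fin.cases ?_ ?_ i
      · simpa using hcc
      · intro j; simp
    have consMono2 : ∀ (c : ℝ), Monotone fun y : Fin n → ℝ => Fin.cons (α := fun _ => ℝ) c y := by
      intro c y y' hy i
      refine Fin.cases ?_ ?_ i
      · simp
      · intro j; simpa using hy j
    -- the sets
    set T' : Set ((Fin (m 0) → ℝ) × ∀ j : Fin n, Fin (m j.succ) → ℝ) :=
      {q | ∀ k, h k (Fin.cons (q.1 (P 0 k)) fun j : Fin n => q.2 j (P j.succ k)) ≤ a} with hT'
    set U : Set (ℝ × (∀ j : Fin n, Fin (m j.succ) → ℝ)) :=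
      {q | ∀ k, h k (Fin.cons q.1 fun j : Fin n => q.2 j (P j.succ k)) ≤ a} with hU
    set V : Set (ℝ × (Fin n → ℝ)) := {q | ∀ k, h k (Fin.cons q.1 q.2) ≤ a} with hV
    have hT'm : MeasurableSet T' :=
      decorr_meas_setOf_forall_le
        (fun k (q : (Fin (m 0) → ℝ) × ∀ j : Fin n, Fin (m j.succ) → ℝ) =>
          h k (Fin.cons (q.1 (P 0 k)) fun j : Fin n => q.2 j (P j.succ k)))
        (fun k => by
          have hg : Measurable fun (q : (Fin (m 0) → ℝ) × ∀ j : Fin n, Fin (m j.succ) → ℝ) =>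
              ((q.1 (P 0 k), fun j : Fin n => q.2 j (P j.succ k)) : ℝ × (Fin n → ℝ)) :=
            ((measurable_pi_apply (P 0 k)).comp measurable_fst).prodMk
              (measurable_pi_lambda _ fun j : Fin n =>
                (measurable_pi_apply (P j.succ k)).comp
                  ((measurable_pi_apply j).comp measurable_snd))
          exact (hmeas k).comp (mcons.comp hg)) a
    have hUm : MeasurableSet U :=
      decorr_meas_setOf_forall_le
        (fun k (q : ℝ × ∀ j : Fin n, Fin (m j.succ) → ℝ) =>
          h k (Fin.cons q.1 fun j : Fin n => q.2 j (P j.succ k)))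
        (fun k => by
          have hg : Measurable fun (q : ℝ × ∀ j : Fin n, Fin (m j.succ) → ℝ) =>
              ((q.1, fun j : Fin n => q.2 j (P j.succ k)) : ℝ × (Fin n → ℝ)) :=
            measurable_fst.prodMk
              (measurable_pi_lambda _ fun j : Fin n =>
                (measurable_pi_apply (P j.succ k)).comp
                  ((measurable_pi_apply j).comp measurable_snd))
          exact (hmeas k).comp (mcons.comp hg)) a
    have hVm : MeasurableSet V :=
      decorr_meas_setOf_forall_le
        (fun k (q : ℝ × (Fin n → ℝ)) => h k (Fin.cons q.1 q.2))
        (fun k => by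
          have hg : Measurable fun (q : ℝ × (Fin n → ℝ)) => (q.1, q.2) :=
            measurable_fst.prodMk measurable_snd
          exact (hmeas k).comp (mcons.comp hg)) a
    -- step 1 : LHS as prod measure of T'
    have hePres := measurePreserving_piFinSuccAbove
      (fun i : Fin (n+1) => Measure.pi fun _ : Fin (m i) => μs i) 0
    have step1 : Measure.pi (fun i : Fin (n+1) => Measure.pi fun _ : Fin (m i) => μs i)
        {x | ∀ k, h k (fun i => x i (P i k)) ≤ a} = (ν0.prod νrest) T' := by
      have hpre : (MeasurableEquiv.piFinSuccAbove (fun i : Fin (n+1) => Fin (m i) → ℝ) 0) ⁻¹' T'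
          = {x | ∀ k, h k (fun i => x i (P i k)) ≤ a} := by
        ext x
        show (∀ k, h k (Fin.cons (x 0 (P 0 k)) fun j => x j.succ (P j.succ k)) ≤ a) ↔ _
        refine forall_congr' fun k => ?_
        have harg : (Fin.cons (α := fun _ => ℝ) (x 0 (P 0 k)) fun j => x j.succ (P j.succ k))
            = fun i => x i (P i k) := by
          funext i
          refine Fin.cases ?_ ?_ i
          · rw [Fin.cons_zero]
          · intro j; rw [Fin.cons_succ]
        rw [harg]
      rw [← hpre]
      exact hePres.measure_preimage hT'm.nullMeasurableSet
    -- step 2 : Fubini over the rest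
    have step2 : (ν0.prod νrest) T' = ∫⁻ xr, ν0 ((fun z => (z, xr)) ⁻¹' T') ∂νrest :=
      Measure.prod_apply_symm hT'm
    -- step 3 : pointwise key inequality
    have step3 : ∀ xr : ∀ j : Fin n, Fin (m j.succ) → ℝ,
        ν0 ((fun z => (z, xr)) ⁻¹' T') ≤ μs 0 ((fun c => (c, xr)) ⁻¹' U) := by
      intro xr
      set I : Fin N → Set ℝ :=
        fun k => {c | h k (Fin.cons c fun j => xr j (P j.succ k)) ≤ a} with hI
      have hIlow : ∀ k, IsLowerSet (I k) := by
        intro k c' c hcc hc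
        exact le_trans (hmono k (consMono1 _ hcc)) hc
      have hseteq : (fun z => (z, xr)) ⁻¹' T' = {z | ∀ k, z (P 0 k) ∈ I k} := rfl
      have hinter : ⋂ k, I k = (fun c => (c, xr)) ⁻¹' U := by
        ext c; simp only [Set.mem_iInter, hI, Set.mem_setOf_eq, Set.mem_preimage, hU]
      rw [hseteq, ← hinter]
      exact decorr_key1 (μs 0) I hIlow (P 0)
    -- step 4+5 : put together and Fubini the other way
    have step45 : ∫⁻ xr, μs 0 ((fun c => (c, xr)) ⁻¹' U) ∂νrest
        = ∫⁻ c, νrest ((fun xr => (c, xr)) ⁻¹' U) ∂(μs 0) := by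
      rw [← Measure.prod_apply_symm hUm, Measure.prod_apply hUm]
    -- step 6 : induction hypothesis pointwise
    have step6 : ∀ c : ℝ, νrest ((fun xr => (c, xr)) ⁻¹' U)
        ≤ πrest ((fun y => (c, y)) ⁻¹' V) := by
      intro c
      have := ih (fun j => m j.succ) (fun j => hm j.succ) (fun j => μs j.succ)
        (fun j => hμs j.succ) (fun k y => h k (Fin.cons c y))
        (fun k => (hmeas k).comp (mconsy c))
        (fun k => (hmono k).comp (consMono2 c))
        (fun j => P j.succ) a
      exact this
    -- step 7 : reassemble the RHS
    have step7 : ∫⁻ c, πrest ((fun y => (c, y)) ⁻¹' V) ∂(μs 0)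
        = Measure.pi μs {y | ∀ k, h k y ≤ a} := by
      rw [← Measure.prod_apply hVm]
      have hePres2 := measurePreserving_piFinSuccAbove (fun i : Fin (n+1) => μs i) 0
      have hpre : (MeasurableEquiv.piFinSuccAbove (fun _ : Fin (n+1) => ℝ) 0) ⁻¹' V
          = {y | ∀ k, h k y ≤ a} := by
        ext y
        show (∀ k, h k (Fin.cons (y 0) fun j => y j.succ) ≤ a) ↔ _
        refine forall_congr' fun k => ?_
        rw [show (Fin.cons (α := fun _ => ℝ) (y 0) fun j => y j.succ) = y from
          Fin.cons_self_tail y]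
      rw [← hpre]
      exact (hePres2.measure_preimage hVm.nullMeasurableSet).symm
    calc Measure.pi (fun i : Fin (n+1) => Measure.pi fun _ : Fin (m i) => μs i)
          {x | ∀ k, h k (fun i => x i (P i k)) ≤ a}
        = (ν0.prod νrest) T' := step1
      _ = ∫⁻ xr, ν0 ((fun z => (z, xr)) ⁻¹' T') ∂νrest := step2
      _ ≤ ∫⁻ xr, μs 0 ((fun c => (c, xr)) ⁻¹' U) ∂νrest := lintegral_mono step3
      _ = ∫⁻ c, νrest ((fun xr => (c, xr)) ⁻¹' U) ∂(μs 0) := step45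
      _ ≤ ∫⁻ c, πrest ((fun y => (c, y)) ⁻¹' V) ∂(μs 0) := lintegral_mono step6
      _ = Measure.pi μs {y | ∀ k, h k y ≤ a} := step7

end DecorrelationAux

/-- **Generalized decorrelation lemma.**
For Borel measurable functions `h_k : ℝⁿ → ℝ` (`1 ≤ k ≤ N`) nondecreasing in each
coordinate, mutually independent real random variables `A_1, …, A_n`, index maps
`P_i : [N] → [n_i]`, and a mutually independent family `A'_{i,s}` with `A'_{i,s}`
distributed as `A_i`, the random variable `max_k h_k(A'_{1,P_1(k)}, …, A'_{n,P_n(k)})`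
stochastically dominates `max_k h_k(A_1, …, A_n)`. -/
theorem decorrelation_max_general
    {Ω : Type*} [MeasurableSpace Ω] (μ : Measure Ω) [IsProbabilityMeasure μ]
    (n N : ℕ) (hn : 1 ≤ n) (hN : 1 ≤ N)
    (h : Fin N → (Fin n → ℝ) → ℝ) (hmeas : ∀ k, Measurable (h k))
    (hmono : ∀ k, Monotone (h k))
    (A : Fin n → Ω → ℝ) (hAmeas : ∀ i, Measurable (A i))
    (hAindep : iIndepFun A μ)
    (m : Fin n → ℕ) (hm : ∀ i, 1 ≤ m i)
    (P : (i : Fin n) → Fin N → Fin (m i))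
    (A' : (i : Fin n) → Fin (m i) → Ω → ℝ)
    (hA'meas : ∀ i s, Measurable (A' i s))
    (hA'indep : iIndepFun
      (fun p : (Σ i : Fin n, Fin (m i)) => A' p.1 p.2) μ)
    (hA'ident : ∀ i s, IdentDistrib (A' i s) (A i) μ μ) (a : ℝ) :
    μ {ω | (⨆ k : Fin N, h k (fun i => A' i (P i k) ω)) ≤ a} ≤
      μ {ω | (⨆ k : Fin N, h k (fun i => A i ω)) ≤ a} := by
  haveI : Nonempty (Fin N) := ⟨⟨0, hN⟩⟩
  have hsup : ∀ g : Fin N → ℝ, ((⨆ k, g k) ≤ a ↔ ∀ k, g k ≤ a) := fun g =>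
    ciSup_le_iff (Set.Finite.bddAbove (Set.finite_range g))
  have e1 : {ω | (⨆ k : Fin N, h k (fun i => A' i (P i k) ω)) ≤ a}
      = {ω | ∀ k, h k (fun i => A' i (P i k) ω) ≤ a} := by
    ext ω; exact hsup _
  have e2 : {ω | (⨆ k : Fin N, h k (fun i => A i ω)) ≤ a}
      = {ω | ∀ k, h k (fun i => A i ω) ≤ a} := by
    ext ω; exact hsup _
  rw [e1, e2]
  set μi : Fin n → Measure ℝ := fun i => Measure.map (A i) μ with hμi
  haveI : ∀ i, IsProbabilityMeasure (μi i) :=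
    fun i => Measure.isProbabilityMeasure_map (hAmeas i).aemeasurable
  -- LHS as a product measure
  have hBmeas : Measurable (fun ω (i : Fin n) (s : Fin (m i)) => A' i s ω) :=
    measurable_pi_lambda _ fun i => measurable_pi_lambda _ fun s => hA'meas i s
  have hS'm : MeasurableSet {x : ∀ i : Fin n, Fin (m i) → ℝ | ∀ k, h k (fun i => x i (P i k)) ≤ a} :=
    decorr_meas_setOf_forall_le
      (fun k (x : ∀ i : Fin n, Fin (m i) → ℝ) => h k (fun i => x i (P i k)))
      (fun k => (hmeas k).comp (measurable_pi_lambda _ fun i =>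
        (measurable_pi_apply (P i k)).comp (measurable_pi_apply i))) a
  have hSm : MeasurableSet {y : Fin n → ℝ | ∀ k, h k y ≤ a} :=
    decorr_meas_setOf_forall_le (fun k (y : Fin n → ℝ) => h k y) (fun k => hmeas k) a
  have hLHS : μ {ω | ∀ k, h k (fun i => A' i (P i k) ω) ≤ a}
      = Measure.pi (fun i => Measure.pi fun _ : Fin (m i) => μi i)
          {x | ∀ k, h k (fun i => x i (P i k)) ≤ a} := by
    rw [← decorr_map_grouped n m A' hA'meas hA'indep μi (fun i s => (hA'ident i s).map_eq),
      Measure.map_apply hBmeas hS'm]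
    rfl
  have hRHS : μ {ω | ∀ k, h k (fun i => A i ω) ≤ a}
      = Measure.pi μi {y | ∀ k, h k y ≤ a} := by
    rw [← decorr_map_tuple A hAmeas hAindep, Measure.map_apply
      (measurable_pi_lambda _ hAmeas) hSm]
    rfl
  rw [hLHS, hRHS]
  exact decorr_core n m hm μi (fun i => inferInstance) h hmeas hmono P a
end

section
/- Let G = (V, E) be a finite directed graph, u ∈ V, and B : V → ℕ. Let (A_i)_{i ∈ V} be mutually independent ℕ-valued random variables. For each i ∈ V and each directed simple path P from i to u in G, let A_{i,P} be a random variable distributed as A_i, with the whole family (A_{i,P})_{i,P} mutually independent. For a rooted subtree T of G at u containing i, let P_i(T) denote the unique directed path from i to u along the edges of T. Then max over rooted subtrees T of G at u of ℓ_u^T((A_{i,P_i(T)})_{i ∈ T}) stochastically dominates max over rooted subtrees T of G at u of ℓ_u^T((A_i)_{i ∈ T}); that is, for every a ∈ ℝ, P(max_T ℓ_u^T((A_{i,P_i(T)})_i) ≤ a) ≤ P(max_T ℓ_u^T((A_i)_i) ≤ a). -/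
open MeasureTheory ProbabilityTheory

variable {V : Type*} [Fintype V] [DecidableEq V]

/-- A directed simple path from `i` to `u` in the graph `(V, E)`: a nonempty duplicate-free
list of vertices starting at `i`, ending at `u`, and following edges of `E`. -/
structure SimplePath (V : Type*) (E : V → V → Prop) (i u : V) where
  verts : List V
  ne : verts ≠ []
  head_eq : verts.head ne = i
  last_eq : verts.getLast ne = u
  chain : verts.Chain' E
  nodup : verts.Nodup

/-- The list of vertices obtained by following `nxt` from `v` until reaching `u`
(with fuel `n`). -/
def followAux (nxt : V → V) (u : V) : ℕ → V → List V
  | 0, v => [v]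
  | n + 1, v => if v = u then [v] else v :: followAux nxt u n (nxt v)

/-- The vertex list of the unique directed path from `i` to the root `u` along the edges
of the rooted subtree `T`. -/
def treePathVerts {E : V → V → Prop} {u : V} (T : RootedSubtree V E u) (i : V) : List V :=
  followAux T.nxt u (Fintype.card V) i

/-! ### Auxiliary material for the proof -/

attribute [local instance] Classical.propDecidable

set_option maxHeartbeats 1000000

namespace TreeOfTrees

open scoped ENNReal

/-- Extensionality for simple paths: they are determined by their vertex lists. -/
lemma SimplePath.ext' {E : V → V → Prop} {i u : V} {P Q : SimplePath V E i u}
    (h : P.verts = Q.verts) : P = Q := by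
  cases P; cases Q; cases h; rfl

instance instFiniteSimplePath (E : V → V → Prop) (i u : V) : Finite (SimplePath V E i u) := by
  refine Finite.of_injective
    (fun P => (fun k : Fin (Fintype.card V + 1) => P.verts[(k : ℕ)]?)) ?_
  intro P Q h
  refine SimplePath.ext' ?_
  have hlenP : P.verts.length ≤ Fintype.card V := P.nodup.length_le_card
  have hlenQ : Q.verts.length ≤ Fintype.card V := Q.nodup.length_le_card
  apply List.ext_getElem?'
  intro n hn
  have hn' : n < Fintype.card V + 1 := by
    have := max_le (Nat.le_succ_of_le hlenP) (Nat.le_succ_of_le hlenQ)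
    omega
  exact congrFun h ⟨n, hn'⟩

noncomputable instance instFintypeSimplePath (E : V → V → Prop) (i u : V) :
    Fintype (SimplePath V E i u) := Fintype.ofFinite _

/-- The index type of decorated random variables: a vertex together with a simple path
from it to `u`. -/
abbrev PathIdx (V : Type*) (E : V → V → Prop) (u : V) := Σ i : V, SimplePath V E i u

section Mono

variable {E : V → V → Prop} {u : V}

lemma subForwardAux_mono (T : RootedSubtree V E u) (B : V → ℕ) {a a' : V → ℕ}
    (h : ∀ v, a v ≤ a' v) : ∀ n v, subForwardAux T B a n v ≤ subForwardAux T B a' n v := by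
  intro n
  induction n with
  | zero => intro v; exact Nat.sub_le_sub_right (h v) _
  | succ n ih =>
      intro v
      exact Nat.sub_le_sub_right
        (Nat.add_le_add (h v) (Finset.sum_le_sum fun w _ => ih w)) _

lemma rootLoad_mono (T : RootedSubtree V E u) (B : V → ℕ) {a a' : V → ℕ}
    (h : ∀ v, a v ≤ a' v) : rootLoad T B a ≤ rootLoad T B a' :=
  Nat.add_le_add (h u) (Finset.sum_le_sum fun w _ => subForwardAux_mono T B h _ w)

end Mono

/-- One-dimensional Chebyshev-type inequality for indicator weights of two
downward-closed predicates on `ℕ`. -/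
lemma nested_mul_le (md : ℕ → ℝ≥0∞) (hmd : ∑' n, md n ≤ 1) (P Q : ℕ → Prop)
    (hP : ∀ s t, s ≤ t → P t → P s) (hQ : ∀ s t, s ≤ t → Q t → Q s) :
    (∑' s, if P s then md s else 0) * (∑' t, if Q t then md t else 0) ≤
      ∑' t, if P t ∧ Q t then md t else 0 := by
  have hb : ∀ (R : ℕ → Prop), (∑' s, if R s then md s else 0) ≤ 1 := by
    intro R
    refine le_trans (ENNReal.tsum_le_tsum fun n => ?_) hmd
    split <;> simp
  by_cases hc : ∀ s, P s → Q s
  · have h1 : (∑' t, if P t ∧ Q t then md t else 0) = ∑' t, if P t then md t else 0 :=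
      tsum_congr fun t => by
        by_cases h : P t
        · rw [if_pos ⟨h, hc t h⟩, if_pos h]
        · rw [if_neg (fun hh => h hh.1), if_neg h]
    rw [h1]
    calc (∑' s, if P s then md s else 0) * (∑' t, if Q t then md t else 0)
        ≤ (∑' s, if P s then md s else 0) * 1 := mul_le_mul_right (hb Q) _
      _ = ∑' s, if P s then md s else 0 := mul_one _
  · push_neg at hc
    obtain ⟨s₀, hPs₀, hQs₀⟩ := hc
    have hc' : ∀ s, Q s → P s := by
      intro s hQs
      have hs : s ≤ s₀ := by
        by_contra hlt
        exact hQs₀ (hQ s₀ s (le_of_not_ge hlt) hQs)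
      exact hP s s₀ hs hPs₀
    have h1 : (∑' t, if P t ∧ Q t then md t else 0) = ∑' t, if Q t then md t else 0 :=
      tsum_congr fun t => by
        by_cases h : Q t
        · rw [if_pos ⟨hc' t h, h⟩, if_pos h]
        · rw [if_neg (fun hh => h hh.2), if_neg h]
    rw [h1]
    calc (∑' s, if P s then md s else 0) * (∑' t, if Q t then md t else 0)
        ≤ 1 * (∑' t, if Q t then md t else 0) := mul_le_mul_left (hb P) _
      _ = ∑' t, if Q t then md t else 0 := one_mul _

section MeasureSide

variable {Ω : Type*} [MeasurableSpace Ω] (μ : Measure Ω)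

/-- The total mass of the fibers of an `ℕ`-valued random variable. -/
lemma tsum_fiber_one [IsProbabilityMeasure μ] (f : Ω → ℕ) (hf : Measurable f) :
    ∑' n, μ (f ⁻¹' {n}) = 1 := by
  have hdis : Pairwise (Function.onFun Disjoint fun n : ℕ => f ⁻¹' {n}) :=
    fun m n hmn => Set.disjoint_left.2 fun ω h1 h2 =>
      hmn ((h1 : f ω = m).symm.trans h2)
  have hU : (⋃ n, f ⁻¹' {n}) = Set.univ := Set.eq_univ_of_forall fun ω =>
    Set.mem_iUnion.2 ⟨f ω, rfl⟩
  calc ∑' n, μ (f ⁻¹' {n})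
      = μ (⋃ n, f ⁻¹' {n}) :=
        (measure_iUnion hdis fun n => hf (measurableSet_singleton n)).symm
    _ = 1 := by rw [hU, measure_univ]

/-- Product formula for fibers of an independent family, precomposed with an
injective reindexing. -/
lemma meas_iInter_comp {ι κ : Type*} [Fintype κ]
    (f : ι → Ω → ℕ) (hind : iIndepFun f μ)
    (j : κ → ι) (hj : Function.Injective j) (x : κ → ℕ) :
    μ (⋂ k, f (j k) ⁻¹' {x k}) = ∏ k, μ (f (j k) ⁻¹' {x k}) := by
  have hsets : ∀ k : κ, {n : ℕ | ∀ k', j k' = j k → n = x k'} = {x k} := by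
    intro k; ext n
    simp only [Set.mem_setOf_eq, Set.mem_singleton_iff]
    exact ⟨fun h => h k rfl, by rintro rfl k' hk'; rw [hj hk']⟩
  have H := hind.measure_inter_preimage_eq_mul (Finset.univ.map ⟨j, hj⟩)
    (sets := fun p => {n : ℕ | ∀ k', j k' = p → n = x k'})
    (fun i _ => MeasurableSet.of_discrete)
  have hL : (⋂ p ∈ Finset.univ.map ⟨j, hj⟩, f p ⁻¹' {n : ℕ | ∀ k', j k' = p → n = x k'})
      = ⋂ k, f (j k) ⁻¹' {x k} := by
    ext ω
    simp only [Set.mem_iInter, Finset.mem_map, Finset.mem_univ, true_and,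
      Function.Embedding.coeFn_mk]
    constructor
    · intro h k
      have := h (j k) ⟨k, rfl⟩
      rwa [hsets k] at this
    · rintro h p ⟨k, rfl⟩
      rw [hsets k]
      exact h k
  have hR : (∏ p ∈ Finset.univ.map ⟨j, hj⟩, μ (f p ⁻¹' {n : ℕ | ∀ k', j k' = p → n = x k'}))
      = ∏ k, μ (f (j k) ⁻¹' {x k}) := by
    rw [Finset.prod_map]
    exact Finset.prod_congr rfl fun k _ => by rw [Function.Embedding.coeFn_mk, hsets k]
  rw [hL, hR] at H
  exact H

/-- Fiber decomposition of the probability of an event depending on a finite family of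
`ℕ`-valued random variables with independent fibers. -/
lemma fiber_decomp {κ : Type*} [Fintype κ]
    (g : κ → Ω → ℕ) (hg : ∀ k, Measurable (g k))
    (hprod : ∀ x : κ → ℕ, μ (⋂ k, g k ⁻¹' {x k}) = ∏ k, μ (g k ⁻¹' {x k}))
    (Φ : (κ → ℕ) → Prop) :
    μ {ω | Φ (fun k => g k ω)} =
      ∑' x : κ → ℕ, if Φ x then ∏ k, μ (g k ⁻¹' {x k}) else 0 := by
  have hfib : ∀ x : κ → ℕ, MeasurableSet (⋂ k, g k ⁻¹' {x k}) :=
    fun x => MeasurableSet.iInter fun k => (hg k) (measurableSet_singleton _)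
  set s : (κ → ℕ) → Set Ω := fun x => if Φ x then ⋂ k, g k ⁻¹' {x k} else ∅ with hs
  have hmem : ∀ (ω : Ω) (x : κ → ℕ), ω ∈ s x ↔ (fun k => g k ω) = x ∧ Φ x := by
    intro ω x
    rw [hs]
    dsimp only
    split
    · rename_i h
      simp only [Set.mem_iInter, Set.mem_preimage, Set.mem_singleton_iff]
      exact ⟨fun hh => ⟨funext hh, h⟩, fun hh k => congrFun hh.1 k⟩
    · rename_i h
      simp only [Set.mem_empty_iff_false, false_iff]
      exact fun hh => h hh.2
  have hcover : {ω | Φ (fun k => g k ω)} = ⋃ x, s x := by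
    ext ω
    simp only [Set.mem_setOf_eq, Set.mem_iUnion]
    constructor
    · intro h
      exact ⟨fun k => g k ω, (hmem ω _).2 ⟨rfl, h⟩⟩
    · rintro ⟨x, hx⟩
      obtain ⟨hx1, hx2⟩ := (hmem ω x).1 hx
      rwa [hx1]
  have hdisj : Pairwise (Function.onFun Disjoint s) := by
    intro x y hxy
    refine Set.disjoint_left.2 fun ω h1 h2 => hxy ?_
    obtain ⟨e1, _⟩ := (hmem ω x).1 h1
    obtain ⟨e2, _⟩ := (hmem ω y).1 h2
    rw [← e1, ← e2]
  have hsm : ∀ x, MeasurableSet (s x) := by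
    intro x
    rw [hs]
    dsimp only
    split
    · exact hfib x
    · exact MeasurableSet.empty
  rw [hcover, measure_iUnion hdisj hsm]
  refine tsum_congr fun x => ?_
  rw [hs]
  dsimp only
  split
  · exact hprod x
  · exact measure_empty

end MeasureSide

section Pairing

variable {ι : Type*} [DecidableEq ι]

/-- Insert two values at two distinguished coordinates. -/
noncomputable def insPair (q₀ p₀ : ι) (s t : ℕ) (w : {p : ι // p ≠ q₀ ∧ p ≠ p₀} → ℕ) :
    ι → ℕ := fun p => if h1 : p = q₀ then s else if h2 : p = p₀ then t else w ⟨p, h1, h2⟩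

lemma insPair_q₀ (q₀ p₀ : ι) (s t : ℕ) (w : {p : ι // p ≠ q₀ ∧ p ≠ p₀} → ℕ) :
    insPair q₀ p₀ s t w q₀ = s := by simp [insPair]

lemma insPair_p₀ (q₀ p₀ : ι) (h : q₀ ≠ p₀) (s t : ℕ) (w : {p : ι // p ≠ q₀ ∧ p ≠ p₀} → ℕ) :
    insPair q₀ p₀ s t w p₀ = t := by
  rw [insPair, dif_neg (Ne.symm h), dif_pos rfl]

lemma insPair_diag_mono (q₀ p₀ : ι) {s t : ℕ} (hst : s ≤ t)
    (w : {p : ι // p ≠ q₀ ∧ p ≠ p₀} → ℕ) (p : ι) :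
    insPair q₀ p₀ s s w p ≤ insPair q₀ p₀ t t w p := by
  unfold insPair
  split_ifs <;> first | exact hst | exact le_refl _

lemma insPair_other (q₀ p₀ : ι) (s t : ℕ) (w : {p : ι // p ≠ q₀ ∧ p ≠ p₀} → ℕ)
    {p : ι} (h1 : p ≠ q₀) (h2 : p ≠ p₀) :
    insPair q₀ p₀ s t w p = w ⟨p, h1, h2⟩ := by
  rw [insPair, dif_neg h1, dif_neg h2]

/-- The equivalence splitting off two coordinates. -/
noncomputable def pairEquiv (q₀ p₀ : ι) (hne : q₀ ≠ p₀) :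
    (ι → ℕ) ≃ ℕ × ℕ × ({p : ι // p ≠ q₀ ∧ p ≠ p₀} → ℕ) where
  toFun x := (x q₀, x p₀, fun r => x r.1)
  invFun z := insPair q₀ p₀ z.1 z.2.1 z.2.2
  left_inv x := by
    funext p
    by_cases h1 : p = q₀
    · subst h1; exact insPair_q₀ _ _ _ _ _
    · by_cases h2 : p = p₀
      · subst h2; exact insPair_p₀ _ _ hne _ _ _
      · exact insPair_other _ _ _ _ _ h1 h2
  right_inv z := by
    obtain ⟨s, t, w⟩ := z
    refine Prod.ext (insPair_q₀ _ _ _ _ _) (Prod.ext (insPair_p₀ _ _ hne _ _ _) ?_)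
    funext r
    exact insPair_other _ _ _ _ _ r.2.1 r.2.2

lemma tsum_pair_split (q₀ p₀ : ι) (hne : q₀ ≠ p₀) (f : (ι → ℕ) → ℝ≥0∞) :
    ∑' x : ι → ℕ, f x =
      ∑' s : ℕ, ∑' t : ℕ, ∑' w : {p : ι // p ≠ q₀ ∧ p ≠ p₀} → ℕ,
        f (insPair q₀ p₀ s t w) := by
  rw [← Equiv.tsum_eq (pairEquiv q₀ p₀ hne).symm f]
  rw [ENNReal.tsum_prod']
  refine tsum_congr fun s => ?_
  rw [ENNReal.tsum_prod']
  exact tsum_congr fun t => tsum_congr fun w => rfl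

lemma prod_insPair [Fintype ι] (q₀ p₀ : ι) (hne : q₀ ≠ p₀) (m : ι → ℕ → ℝ≥0∞)
    (s t : ℕ) (w : {p : ι // p ≠ q₀ ∧ p ≠ p₀} → ℕ) :
    ∏ p, m p (insPair q₀ p₀ s t w p) =
      m q₀ s * (m p₀ t *
        ∏ p ∈ (Finset.univ.erase q₀).erase p₀, m p (insPair q₀ p₀ 0 0 w p)) := by
  rw [← Finset.mul_prod_erase Finset.univ (fun p => m p (insPair q₀ p₀ s t w p))
    (Finset.mem_univ q₀), insPair_q₀]
  have hp₀ : p₀ ∈ Finset.univ.erase q₀ :=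
    Finset.mem_erase.2 ⟨Ne.symm hne, Finset.mem_univ _⟩
  rw [← Finset.mul_prod_erase _ (fun p => m p (insPair q₀ p₀ s t w p)) hp₀,
    insPair_p₀ _ _ hne]
  congr 2
  refine Finset.prod_congr rfl fun p hp => ?_
  obtain ⟨h2, h1, _⟩ : p ≠ p₀ ∧ p ≠ q₀ ∧ p ∈ Finset.univ := by
    have := Finset.mem_erase.1 hp
    exact ⟨this.1, Finset.mem_erase.1 this.2⟩
  rw [insPair_other _ _ _ _ _ h1 h2, insPair_other _ _ _ _ _ h1 h2]

end Pairing

section Core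

variable {E : V → V → Prop} {u : V}

/-- The weighted sum representing the probability that all root loads, with arrival
variables labelled by `c`, are at most `a`. -/
noncomputable def Wsum (B : V → ℕ) (a : ℝ) (m : PathIdx V E u → ℕ → ℝ≥0∞)
    (c : RootedSubtree V E u → (i : V) → SimplePath V E i u) : ℝ≥0∞ :=
  ∑' x : PathIdx V E u → ℕ,
    if (∀ T : RootedSubtree V E u, (rootLoad T B (fun i => x ⟨i, c T i⟩) : ℝ) ≤ a)
    then ∏ p, m p (x p) else 0

lemma Wsum_congr (B : V → ℕ) (a : ℝ) (m : PathIdx V E u → ℕ → ℝ≥0∞)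
    {c c' : RootedSubtree V E u → (i : V) → SimplePath V E i u}
    (h : ∀ T i, c T i = c' T i) : Wsum B a m c = Wsum B a m c' := by
  unfold Wsum
  refine tsum_congr fun x => ?_
  have hc : ∀ T : RootedSubtree V E u,
      (fun i => x ⟨i, c T i⟩) = fun i => x ⟨i, c' T i⟩ :=
    fun T => funext fun i => by rw [h T i]
  refine if_congr (forall_congr' fun T => by rw [hc T]) rfl rfl

/-- The key merging step: relabelling all occurrences of the path `q'` at vertex `i₀`
by the reference path `P0 i₀` can only increase the weighted sum. -/
lemma Wsum_merge_le (B : V → ℕ) (a : ℝ) (m : PathIdx V E u → ℕ → ℝ≥0∞)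
    (hμm1 : ∀ p : PathIdx V E u, ∑' n, m p n = 1)
    (hkey : ∀ (i : V) (P Q : SimplePath V E i u), m ⟨i, P⟩ = m ⟨i, Q⟩)
    (c : RootedSubtree V E u → (i : V) → SimplePath V E i u)
    (P0 : ∀ i : V, SimplePath V E i u)
    (i₀ : V) (q' : SimplePath V E i₀ u) (hq : q' ≠ P0 i₀) :
    Wsum B a m c ≤ Wsum B a m
      (fun T i => if (⟨i, c T i⟩ : PathIdx V E u) = ⟨i₀, q'⟩ then P0 i else c T i) := by
  set q₀ : PathIdx V E u := ⟨i₀, q'⟩ with hq₀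
  set p₀ : PathIdx V E u := ⟨i₀, P0 i₀⟩ with hp₀
  have hne : q₀ ≠ p₀ := by
    intro h
    rw [hq₀, hp₀, Sigma.mk.inj_iff] at h
    exact hq (eq_of_heq h.2)
  set c' : RootedSubtree V E u → (i : V) → SimplePath V E i u :=
    fun T i => if (⟨i, c T i⟩ : PathIdx V E u) = ⟨i₀, q'⟩ then P0 i else c T i with hc'
  -- coordinate classification facts
  have hfst : ∀ {T : RootedSubtree V E u} {i : V},
      (⟨i, c T i⟩ : PathIdx V E u) = q₀ → i = i₀ := by
    intro T i h
    exact congrArg Sigma.fst h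
  have hclass : ∀ {T : RootedSubtree V E u},
      (⟨i₀, c T i₀⟩ : PathIdx V E u) = q₀ ↔ c T i₀ = q' := by
    intro T
    rw [hq₀, Sigma.mk.inj_iff]
    constructor
    · intro h; exact eq_of_heq h.2
    · intro h; exact ⟨rfl, heq_of_eq h⟩
  -- the two indicator predicates
  set F : ℕ → ({p : PathIdx V E u // p ≠ q₀ ∧ p ≠ p₀} → ℕ) → Prop :=
    fun s w => ∀ T : RootedSubtree V E u, c T i₀ = q' →
      (rootLoad T B (fun i => insPair q₀ p₀ s s w ⟨i, c T i⟩) : ℝ) ≤ a with hF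
  set G : ℕ → ({p : PathIdx V E u // p ≠ q₀ ∧ p ≠ p₀} → ℕ) → Prop :=
    fun t w => ∀ T : RootedSubtree V E u, c T i₀ ≠ q' →
      (rootLoad T B (fun i => insPair q₀ p₀ t t w ⟨i, c T i⟩) : ℝ) ≤ a with hG
  -- pointwise function rewrites
  have hfunF : ∀ (s t : ℕ) w (T : RootedSubtree V E u), c T i₀ = q' →
      (fun i => insPair q₀ p₀ s t w ⟨i, c T i⟩) =
        (fun i => insPair q₀ p₀ s s w ⟨i, c T i⟩) := by
    intro s t w T hT
    funext i
    by_cases h1 : (⟨i, c T i⟩ : PathIdx V E u) = q₀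
    · rw [h1, insPair_q₀, insPair_q₀]
    · have h2 : (⟨i, c T i⟩ : PathIdx V E u) ≠ p₀ := by
        intro h2
        have hi : i = i₀ := congrArg Sigma.fst h2
        subst hi
        rw [hp₀, Sigma.mk.inj_iff] at h2
        exact hq (hT ▸ eq_of_heq h2.2)
      rw [insPair_other _ _ _ _ _ h1 h2, insPair_other _ _ _ _ _ h1 h2]
  have hfunG : ∀ (s t : ℕ) w (T : RootedSubtree V E u), c T i₀ ≠ q' →
      (fun i => insPair q₀ p₀ s t w ⟨i, c T i⟩) =
        (fun i => insPair q₀ p₀ t t w ⟨i, c T i⟩) := by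
    intro s t w T hT
    funext i
    have h1 : (⟨i, c T i⟩ : PathIdx V E u) ≠ q₀ := by
      intro h1
      have hi : i = i₀ := hfst h1
      subst hi
      exact hT (hclass.1 h1)
    by_cases h2 : (⟨i, c T i⟩ : PathIdx V E u) = p₀
    · rw [h2, insPair_p₀ _ _ hne, insPair_p₀ _ _ hne]
    · rw [insPair_other _ _ _ _ _ h1 h2, insPair_other _ _ _ _ _ h1 h2]
  have hcnotq : ∀ (T : RootedSubtree V E u), c T i₀ ≠ q' → ∀ i, c' T i = c T i := by
    intro T hT i
    rw [hc']
    dsimp only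
    rw [if_neg]
    intro h
    have hi : i = i₀ := hfst h
    subst hi
    exact hT (hclass.1 h)
  have hfunF' : ∀ (s t : ℕ) w (T : RootedSubtree V E u), c T i₀ = q' →
      (fun i => insPair q₀ p₀ s t w ⟨i, c' T i⟩) =
        (fun i => insPair q₀ p₀ t t w ⟨i, c T i⟩) := by
    intro s t w T hT
    funext i
    by_cases hi : i = i₀
    · subst hi
      have hci' : c' T i = P0 i := by
        rw [hc']
        dsimp only
        rw [if_pos (hclass.2 hT)]
      rw [hci']
      have : (⟨i, P0 i⟩ : PathIdx V E u) = p₀ := by rw [hp₀]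
      rw [this, insPair_p₀ _ _ hne]
      have hq2 : (⟨i, c T i⟩ : PathIdx V E u) = q₀ := hclass.2 hT
      rw [hq2, insPair_q₀]
    · have hci' : c' T i = c T i := by
        rw [hc']
        dsimp only
        rw [if_neg]
        intro h
        exact hi (hfst h)
      rw [hci']
      have h1 : (⟨i, c T i⟩ : PathIdx V E u) ≠ q₀ := fun h => hi (hfst h)
      have h2 : (⟨i, c T i⟩ : PathIdx V E u) ≠ p₀ := fun h => hi (congrArg Sigma.fst h)
      rw [insPair_other _ _ _ _ _ h1 h2, insPair_other _ _ _ _ _ h1 h2]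
  -- condition splits
  have hcond : ∀ (s t : ℕ) w,
      (∀ T : RootedSubtree V E u,
        (rootLoad T B (fun i => insPair q₀ p₀ s t w ⟨i, c T i⟩) : ℝ) ≤ a)
      ↔ (F s w ∧ G t w) := by
    intro s t w
    constructor
    · intro h
      constructor
      · intro T hT; rw [← hfunF s t w T hT]; exact h T
      · intro T hT; rw [← hfunG s t w T hT]; exact h T
    · rintro ⟨h1, h2⟩ T
      by_cases hT : c T i₀ = q'
      · rw [hfunF s t w T hT]; exact h1 T hT
      · rw [hfunG s t w T hT]; exact h2 T hT
  have hcond' : ∀ (s t : ℕ) w,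
      (∀ T : RootedSubtree V E u,
        (rootLoad T B (fun i => insPair q₀ p₀ s t w ⟨i, c' T i⟩) : ℝ) ≤ a)
      ↔ (F t w ∧ G t w) := by
    intro s t w
    have hGrw : ∀ T : RootedSubtree V E u, c T i₀ ≠ q' →
        (fun i => insPair q₀ p₀ s t w ⟨i, c' T i⟩) =
          (fun i => insPair q₀ p₀ t t w ⟨i, c T i⟩) := by
      intro T hT
      have : (fun i => insPair q₀ p₀ s t w ⟨i, c' T i⟩) =
          (fun i => insPair q₀ p₀ s t w ⟨i, c T i⟩) :=
        funext fun i => by rw [hcnotq T hT i]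
      rw [this, hfunG s t w T hT]
    constructor
    · intro h
      constructor
      · intro T hT; rw [← hfunF' s t w T hT]; exact h T
      · intro T hT; rw [← hGrw T hT]; exact h T
    · rintro ⟨h1, h2⟩ T
      by_cases hT : c T i₀ = q'
      · rw [hfunF' s t w T hT]; exact h1 T hT
      · rw [hGrw T hT]; exact h2 T hT
  -- abbreviation for the residual weight
  set M : ({p : PathIdx V E u // p ≠ q₀ ∧ p ≠ p₀} → ℕ) → ℝ≥0∞ :=
    fun w => ∏ p ∈ (Finset.univ.erase q₀).erase p₀, m p (insPair q₀ p₀ 0 0 w p) with hM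
  have hqp : m q₀ = m p₀ := hkey i₀ q' (P0 i₀)
  -- rewrite both sides
  have hLHS : Wsum B a m c = ∑' w, (∑' s, if F s w then m p₀ s else 0) *
      ((∑' t, if G t w then m p₀ t else 0) * M w) := by
    rw [Wsum, tsum_pair_split q₀ p₀ hne]
    have h1 : ∀ (s t : ℕ) w,
        (if (∀ T : RootedSubtree V E u,
            (rootLoad T B (fun i => insPair q₀ p₀ s t w ⟨i, c T i⟩) : ℝ) ≤ a)
          then ∏ p, m p (insPair q₀ p₀ s t w p) else 0)
        = (if F s w then m p₀ s else 0) * ((if G t w then m p₀ t else 0) * M w) := by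
      intro s t w
      rw [prod_insPair q₀ p₀ hne, hqp, if_congr (hcond s t w) rfl rfl]
      by_cases h1 : F s w <;> by_cases h2 : G t w
      · rw [if_pos (⟨h1, h2⟩ : F s w ∧ G t w), if_pos h1, if_pos h2]
      · rw [if_neg (fun hh : F s w ∧ G t w => h2 hh.2), if_neg h2, zero_mul, mul_zero]
      · rw [if_neg (fun hh : F s w ∧ G t w => h1 hh.1), if_neg h1, zero_mul]
      · rw [if_neg (fun hh : F s w ∧ G t w => h1 hh.1), if_neg h1, zero_mul]
    calc (∑' s, ∑' t, ∑' w,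
          if (∀ T : RootedSubtree V E u,
            (rootLoad T B (fun i => insPair q₀ p₀ s t w ⟨i, c T i⟩) : ℝ) ≤ a)
          then ∏ p, m p (insPair q₀ p₀ s t w p) else 0)
        = ∑' s, ∑' t, ∑' w,
            (if F s w then m p₀ s else 0) * ((if G t w then m p₀ t else 0) * M w) := by
          refine tsum_congr fun s => tsum_congr fun t => tsum_congr fun w => h1 s t w
      _ = ∑' s, ∑' w, ∑' t,
            (if F s w then m p₀ s else 0) * ((if G t w then m p₀ t else 0) * M w) :=
          tsum_congr fun s => ENNReal.tsum_comm
      _ = ∑' w, ∑' s, ∑' t,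
            (if F s w then m p₀ s else 0) * ((if G t w then m p₀ t else 0) * M w) :=
          ENNReal.tsum_comm
      _ = ∑' w, (∑' s, if F s w then m p₀ s else 0) *
            ((∑' t, if G t w then m p₀ t else 0) * M w) := by
          refine tsum_congr fun w => ?_
          have hinner : ∀ s : ℕ, (∑' t, (if F s w then m p₀ s else 0) *
              ((if G t w then m p₀ t else 0) * M w))
              = (if F s w then m p₀ s else 0) *
                ((∑' t, if G t w then m p₀ t else 0) * M w) := by
            intro s
            rw [ENNReal.tsum_mul_left, ENNReal.tsum_mul_right]
          rw [tsum_congr hinner, ENNReal.tsum_mul_right]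
  have hRHS : Wsum B a m c' = ∑' w, (∑' t, if F t w ∧ G t w then m p₀ t else 0) * M w := by
    rw [Wsum, tsum_pair_split q₀ p₀ hne]
    have h1 : ∀ (s t : ℕ) w,
        (if (∀ T : RootedSubtree V E u,
            (rootLoad T B (fun i => insPair q₀ p₀ s t w ⟨i, c' T i⟩) : ℝ) ≤ a)
          then ∏ p, m p (insPair q₀ p₀ s t w p) else 0)
        = m p₀ s * ((if F t w ∧ G t w then m p₀ t else 0) * M w) := by
      intro s t w
      rw [prod_insPair q₀ p₀ hne, hqp, if_congr (hcond' s t w) rfl rfl]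
      by_cases h2 : F t w ∧ G t w
      · rw [if_pos h2, if_pos h2]
      · rw [if_neg h2, if_neg h2, zero_mul, mul_zero]
    calc (∑' s, ∑' t, ∑' w,
          if (∀ T : RootedSubtree V E u,
            (rootLoad T B (fun i => insPair q₀ p₀ s t w ⟨i, c' T i⟩) : ℝ) ≤ a)
          then ∏ p, m p (insPair q₀ p₀ s t w p) else 0)
        = ∑' s, ∑' t, ∑' w,
            m p₀ s * ((if F t w ∧ G t w then m p₀ t else 0) * M w) := by
          refine tsum_congr fun s => tsum_congr fun t => tsum_congr fun w => h1 s t w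
      _ = ∑' s, m p₀ s * ∑' t, ∑' w,
            ((if F t w ∧ G t w then m p₀ t else 0) * M w) := by
          refine tsum_congr fun s => ?_
          rw [← ENNReal.tsum_mul_left]
          exact tsum_congr fun t => ENNReal.tsum_mul_left
      _ = ∑' t, ∑' w, ((if F t w ∧ G t w then m p₀ t else 0) * M w) := by
          rw [ENNReal.tsum_mul_right, hμm1 p₀, one_mul]
      _ = ∑' w, ∑' t, ((if F t w ∧ G t w then m p₀ t else 0) * M w) :=
          ENNReal.tsum_comm
      _ = ∑' w, (∑' t, if F t w ∧ G t w then m p₀ t else 0) * M w :=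
          tsum_congr fun w => ENNReal.tsum_mul_right
  rw [hLHS, hRHS]
  refine ENNReal.tsum_le_tsum fun w => ?_
  rw [← mul_assoc]
  refine mul_le_mul_left ?_ (M w)
  refine nested_mul_le (m p₀) (le_of_eq (hμm1 p₀)) (fun s => F s w) (fun t => G t w)
    ?_ ?_
  · intro s t hst hFt T hT
    refine le_trans ?_ (hFt T hT)
    refine Nat.cast_le.2 (rootLoad_mono T B fun v => ?_)
    exact insPair_diag_mono q₀ p₀ hst w _
  · intro s t hst hGt T hT
    refine le_trans ?_ (hGt T hT)
    refine Nat.cast_le.2 (rootLoad_mono T B fun v => ?_)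
    exact insPair_diag_mono q₀ p₀ hst w _

/-- The set of "bad" labels still used by `c` that differ from the reference labels. -/
noncomputable def BadSet (c : RootedSubtree V E u → (i : V) → SimplePath V E i u)
    (P0 : ∀ i : V, SimplePath V E i u) : Finset (PathIdx V E u) :=
  Finset.univ.filter fun p => (∃ T : RootedSubtree V E u, c T p.1 = p.2) ∧ p.2 ≠ P0 p.1

lemma Wsum_le_of_badcard (B : V → ℕ) (a : ℝ) (m : PathIdx V E u → ℕ → ℝ≥0∞)
    (hμm1 : ∀ p : PathIdx V E u, ∑' n, m p n = 1)
    (hkey : ∀ (i : V) (P Q : SimplePath V E i u), m ⟨i, P⟩ = m ⟨i, Q⟩)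
    (P0 : ∀ i : V, SimplePath V E i u) :
    ∀ (n : ℕ) (c : RootedSubtree V E u → (i : V) → SimplePath V E i u),
      (BadSet c P0).card ≤ n → Wsum B a m c ≤ Wsum B a m (fun _ i => P0 i) := by
  intro n
  induction n with
  | zero =>
      intro c hcard
      have hempty : BadSet c P0 = ∅ := Finset.card_eq_zero.1 (Nat.le_zero.1 hcard)
      have hall : ∀ (T : RootedSubtree V E u) (i : V), c T i = P0 i := by
        intro T i
        by_contra hne
        have : (⟨i, c T i⟩ : PathIdx V E u) ∈ BadSet c P0 :=
          Finset.mem_filter.2 ⟨Finset.mem_univ _, ⟨T, rfl⟩, hne⟩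
        rw [hempty] at this
        exact absurd this (Finset.notMem_empty _)
      exact le_of_eq (Wsum_congr B a m hall)
  | succ n ih =>
      intro c hcard
      by_cases hempty : BadSet c P0 = ∅
      · have hall : ∀ (T : RootedSubtree V E u) (i : V), c T i = P0 i := by
          intro T i
          by_contra hne
          have : (⟨i, c T i⟩ : PathIdx V E u) ∈ BadSet c P0 :=
            Finset.mem_filter.2 ⟨Finset.mem_univ _, ⟨T, rfl⟩, hne⟩
          rw [hempty] at this
          exact absurd this (Finset.notMem_empty _)
        exact le_of_eq (Wsum_congr B a m hall)
      · obtain ⟨⟨i₀, q'⟩, hmem⟩ := Finset.nonempty_of_ne_empty hempty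
        obtain ⟨-, ⟨T₁, hT₁⟩, hqne⟩ := Finset.mem_filter.1 hmem
        set c' : RootedSubtree V E u → (i : V) → SimplePath V E i u :=
          fun T i => if (⟨i, c T i⟩ : PathIdx V E u) = ⟨i₀, q'⟩ then P0 i else c T i
          with hc'
        have hstep : Wsum B a m c ≤ Wsum B a m c' :=
          Wsum_merge_le B a m hμm1 hkey c P0 i₀ q' hqne
        have hsub : BadSet c' P0 ⊆ (BadSet c P0).erase ⟨i₀, q'⟩ := by
          intro p hp
          obtain ⟨-, ⟨T, hT⟩, hpne⟩ := Finset.mem_filter.1 hp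
          rw [hc'] at hT
          dsimp only at hT
          by_cases hcase : (⟨p.1, c T p.1⟩ : PathIdx V E u) = ⟨i₀, q'⟩
          · rw [if_pos hcase] at hT
            exact absurd hT.symm hpne
          · rw [if_neg hcase] at hT
            refine Finset.mem_erase.2 ⟨?_, ?_⟩
            · intro hpe
              refine hcase ?_
              rw [hT, Sigma.eta, hpe]
            · exact Finset.mem_filter.2 ⟨Finset.mem_univ _, ⟨T, hT⟩, hpne⟩
        have hcard' : (BadSet c' P0).card ≤ n := by
          have h1 := Finset.card_le_card hsub
          have h2 : ((BadSet c P0).erase ⟨i₀, q'⟩).card = (BadSet c P0).card - 1 :=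
            Finset.card_erase_of_mem hmem
          omega
        exact le_trans hstep (ih c' hcard')

end Core

end TreeOfTrees

open TreeOfTrees

open scoped ENNReal

/-- Let `(V, E)` be a finite directed graph, `u ∈ V`, `B` capacities, and
`(A_i)` mutually independent `ℕ`-valued random variables.  For each `i` and each directed
simple path `P` from `i` to `u`, let `A_{i,P}` be distributed as `A_i`, the whole family
being mutually independent, and for a rooted subtree `T` of `G` at `u` let `P_i(T)` be the
unique path from `i` to `u` in `T` (formalized by the selector `sel` together with the
hypothesis `hsel`).  Then `max_T ℓ_u^T((A_{i,P_i(T)})_i)` stochastically dominates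
`max_T ℓ_u^T((A_i)_i)`: for every `a ∈ ℝ`,
`P(max_T ℓ_u^T((A_{i,P_i(T)})_i) ≤ a) ≤ P(max_T ℓ_u^T((A_i)_i) ≤ a)`. -/
theorem tree_of_trees_decorrelation
    {Ω : Type*} [MeasurableSpace Ω] (μ : Measure Ω) [IsProbabilityMeasure μ]
    (E : V → V → Prop) (u : V) (B : V → ℕ)
    (A : V → Ω → ℕ) (hAmeas : ∀ i, Measurable (A i))
    (hindep : iIndepFun A μ)
    (A' : (i : V) → SimplePath V E i u → Ω → ℕ)
    (hA'meas : ∀ i P, Measurable (A' i P))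
    (hA'indep : iIndepFun
      (fun p : (Σ i : V, SimplePath V E i u) => A' p.1 p.2) μ)
    (hA'ident : ∀ i P, IdentDistrib (A' i P) (A i) μ μ)
    (sel : (T : RootedSubtree V E u) → (i : V) → SimplePath V E i u)
    (hsel : ∀ (T : RootedSubtree V E u), ∀ i ∈ T.S, (sel T i).verts = treePathVerts T i) :
    ∀ a : ℝ,
      μ {ω | ∀ T : RootedSubtree V E u,
          (rootLoad T B (fun i => A' i (sel T i) ω) : ℝ) ≤ a} ≤
      μ {ω | ∀ T : RootedSubtree V E u,
          (rootLoad T B (fun i => A i ω) : ℝ) ≤ a} := by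
  intro a
  -- the trivial rooted subtree, used to produce a reference path for every vertex
  have T₀ : RootedSubtree V E u :=
    ⟨{u}, id, Finset.mem_singleton_self u,
      fun v hv hvne => absurd (Finset.mem_singleton.1 hv) hvne,
      fun v hv hvne => absurd (Finset.mem_singleton.1 hv) hvne,
      fun v hv => ⟨0, Finset.mem_singleton.1 hv⟩⟩
  set P0 : ∀ i : V, SimplePath V E i u := fun i => sel T₀ i with hP0
  set m : PathIdx V E u → ℕ → ℝ≥0∞ := fun p n => μ (A' p.1 p.2 ⁻¹' {n}) with hm
  have hμm1 : ∀ p : PathIdx V E u, ∑' n, m p n = 1 :=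
    fun p => tsum_fiber_one μ _ (hA'meas p.1 p.2)
  have hkey : ∀ (i : V) (P Q : SimplePath V E i u), m ⟨i, P⟩ = m ⟨i, Q⟩ := by
    intro i P Q
    funext n
    rw [hm]
    dsimp only
    rw [(hA'ident i P).measure_mem_eq (measurableSet_singleton n),
      ← (hA'ident i Q).measure_mem_eq (measurableSet_singleton n)]
  have hprodA' : ∀ x : PathIdx V E u → ℕ,
      μ (⋂ p, (fun p : PathIdx V E u => A' p.1 p.2) p ⁻¹' {x p}) =
        ∏ p, μ ((fun p : PathIdx V E u => A' p.1 p.2) p ⁻¹' {x p}) :=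
    meas_iInter_comp μ _ hA'indep id Function.injective_id
  have h1 : μ {ω | ∀ T : RootedSubtree V E u,
      (rootLoad T B (fun i => A' i (sel T i) ω) : ℝ) ≤ a} = Wsum B a m sel := by
    rw [Wsum]
    exact fiber_decomp μ (fun p : PathIdx V E u => A' p.1 p.2)
      (fun p => hA'meas p.1 p.2) hprodA'
      (fun x => ∀ T : RootedSubtree V E u,
        (rootLoad T B (fun i => x ⟨i, sel T i⟩) : ℝ) ≤ a)
  have h2 : Wsum B a m sel ≤ Wsum B a m (fun _ i => P0 i) :=
    Wsum_le_of_badcard B a m hμm1 hkey P0 (BadSet sel P0).card sel le_rfl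
  have h3 : Wsum B a m (fun _ i => P0 i) = μ {ω | ∀ T : RootedSubtree V E u,
      (rootLoad T B (fun i => A' i (P0 i) ω) : ℝ) ≤ a} := by
    rw [Wsum]
    exact (fiber_decomp μ (fun p : PathIdx V E u => A' p.1 p.2)
      (fun p => hA'meas p.1 p.2) hprodA'
      (fun x => ∀ T : RootedSubtree V E u,
        (rootLoad T B (fun i => x ⟨i, P0 i⟩) : ℝ) ≤ a)).symm
  have h4 : μ {ω | ∀ T : RootedSubtree V E u,
        (rootLoad T B (fun i => A' i (P0 i) ω) : ℝ) ≤ a}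
      = μ {ω | ∀ T : RootedSubtree V E u, (rootLoad T B (fun i => A i ω) : ℝ) ≤ a} := by
    have hprodL : ∀ y : V → ℕ,
        μ (⋂ i, (fun i : V => A' i (P0 i)) i ⁻¹' {y i}) =
          ∏ i, μ ((fun i : V => A' i (P0 i)) i ⁻¹' {y i}) :=
      meas_iInter_comp μ (fun p : PathIdx V E u => A' p.1 p.2) hA'indep
        (fun i => ⟨i, P0 i⟩) (fun i j h => congrArg Sigma.fst h)
    have hprodR : ∀ y : V → ℕ, μ (⋂ i, A i ⁻¹' {y i}) = ∏ i, μ (A i ⁻¹' {y i}) :=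
      meas_iInter_comp μ A hindep id Function.injective_id
    have hL := fiber_decomp μ (fun i : V => A' i (P0 i))
      (fun i => hA'meas i (P0 i)) hprodL
      (fun y => ∀ T : RootedSubtree V E u, (rootLoad T B y : ℝ) ≤ a)
    have hR := fiber_decomp μ A hAmeas hprodR
      (fun y => ∀ T : RootedSubtree V E u, (rootLoad T B y : ℝ) ≤ a)
    rw [hL, hR]
    refine tsum_congr fun y => ?_
    refine if_congr Iff.rfl ?_ rfl
    refine Finset.prod_congr rfl fun i _ => ?_
    exact (hA'ident i (P0 i)).measure_mem_eq (measurableSet_singleton _)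
  calc μ {ω | ∀ T : RootedSubtree V E u,
        (rootLoad T B (fun i => A' i (sel T i) ω) : ℝ) ≤ a}
      = Wsum B a m sel := h1
    _ ≤ Wsum B a m (fun _ i => P0 i) := h2
    _ = μ {ω | ∀ T : RootedSubtree V E u,
        (rootLoad T B (fun i => A' i (P0 i) ω) : ℝ) ≤ a} := h3
    _ = μ {ω | ∀ T : RootedSubtree V E u,
        (rootLoad T B (fun i => A i ω) : ℝ) ≤ a} := h4
end

section
/- Let ε ∈ (0, 1/2], let d ≥ 1 be an integer, and set ρ = 1 + ε²/d. Let B ∈ ℕ, let m ≤ d, and let A, F_1, …, F_m be mutually independent ℕ-valued random variables such that E[exp(ε F_i)] ≤ ρ for each i ∈ {1, …, m} and E[exp(ε(A − B))] ≤ ε²/(e·d). Then E[exp(ε · max(A + Σ_{i=1}^m F_i − B + 1, 0))] ≤ ρ. -/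
open MeasureTheory ProbabilityTheory

lemma lintegral_prod_of_iIndepFun' {ι : Type*} {Ω : Type*} [MeasurableSpace Ω]
    (μ : Measure Ω) [IsProbabilityMeasure μ] (f : ι → Ω → ENNReal)
    (hmeas : ∀ i, Measurable (f i))
    (hindep : iIndepFun f μ) (s : Finset ι) :
    ∫⁻ ω, ∏ i ∈ s, f i ω ∂μ = ∏ i ∈ s, ∫⁻ ω, f i ω ∂μ := by
  classical
  induction s using Finset.induction_on with
  | empty => simp
  | @insert a s ha ih =>
    rw [Finset.prod_insert ha]
    have hind : IndepFun (f a) (∏ j ∈ s, f j) μ :=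
      (hindep.indepFun_finsetProd_of_notMem hmeas ha).symm
    have : ∫⁻ ω, f a ω * (∏ j ∈ s, f j) ω ∂μ
        = (∫⁻ ω, f a ω ∂μ) * ∫⁻ ω, (∏ j ∈ s, f j) ω ∂μ :=
      lintegral_mul_eq_lintegral_mul_lintegral_of_indepFun''
        (hmeas a).aemeasurable
        (show Measurable (∏ j ∈ s, f j) by
          rw [show (∏ j ∈ s, f j) = fun ω => ∏ j ∈ s, f j ω from
            funext fun ω => Finset.prod_apply ..]
          exact s.measurable_prod fun i _ => hmeas i).aemeasurable hind
    simp only [Finset.prod_apply] at this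
    rw [lintegral_congr (fun ω => by rw [Finset.prod_insert ha]), this, ih]


/-- Let `ε ∈ (0, 1/2]`, `d ≥ 1` an integer, `ρ = 1 + ε²/d`, `B ∈ ℕ` and
`m ≤ d`. Let `A, F_1, …, F_m` be mutually independent `ℕ`-valued random variables with
`E[exp(ε F_i)] ≤ ρ` for each `i` and `E[exp(ε(A − B))] ≤ ε²/(e·d)`. Then
`E[exp(ε · max(A + Σ_i F_i − B + 1, 0))] ≤ ρ`. -/
theorem mgf_forward_induction_step
    {Ω : Type*} [MeasurableSpace Ω] (μ : Measure Ω) [IsProbabilityMeasure μ]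
    (ε : ℝ) (hε0 : 0 < ε) (hε : ε ≤ 1 / 2) (d : ℕ) (hd : 1 ≤ d)
    (B : ℕ) (m : ℕ) (hm : m ≤ d)
    (A : Ω → ℕ) (F : Fin m → Ω → ℕ)
    (hAmeas : Measurable A) (hFmeas : ∀ i, Measurable (F i))
    (hindep : iIndepFun
      (Fin.cons A F : Fin (m + 1) → Ω → ℕ) μ)
    (hF : ∀ i, ∫⁻ ω, ENNReal.ofReal (Real.exp (ε * (F i ω : ℝ))) ∂μ ≤
      ENNReal.ofReal (1 + ε ^ 2 / d))
    (hA : ∫⁻ ω, ENNReal.ofReal (Real.exp (ε * ((A ω : ℝ) - (B : ℝ)))) ∂μ ≤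
      ENNReal.ofReal (ε ^ 2 / (Real.exp 1 * d))) :
    ∫⁻ ω, ENNReal.ofReal
        (Real.exp (ε * max ((A ω : ℝ) + (∑ i, (F i ω : ℝ)) - (B : ℝ) + 1) 0)) ∂μ ≤
      ENNReal.ofReal (1 + ε ^ 2 / d) := by
  classical
  set X : Fin (m + 1) → Ω → ℕ := (Fin.cons A F : Fin (m + 1) → Ω → ℕ) with hXdef
  have hd' : (0:ℝ) < d := by exact_mod_cast hd
  set ρ : ℝ := 1 + ε ^ 2 / d with hρdef
  have hρ0 : (0:ℝ) < ρ := by positivity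
  -- the family of transformed random variables
  set g : Fin (m + 1) → ℕ → ENNReal :=
    Fin.cons (fun n : ℕ => ENNReal.ofReal (Real.exp (ε * ((n : ℝ) - (B : ℝ)))))
      (fun _ (n : ℕ) => ENNReal.ofReal (Real.exp (ε * (n : ℝ)))) with hgdef
  have hconsmeas : ∀ i : Fin (m+1), Measurable (X i) := by
    intro i
    induction i using Fin.cases with
    | zero => simpa [hXdef] using hAmeas
    | succ j => simpa [hXdef] using hFmeas j
  have hGmeas : ∀ i, Measurable (fun ω => g i (X i ω)) :=
    fun i => (measurable_from_top).comp (hconsmeas i)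
  have hGindep : iIndepFun
      (fun i => g i ∘ X i) μ :=
    hindep.comp g (fun i => measurable_from_top)
  -- key pointwise identity
  have key : ∀ ω, ENNReal.ofReal
      (Real.exp (ε * ((A ω : ℝ) + (∑ i, (F i ω : ℝ)) - (B : ℝ) + 1)))
      = ENNReal.ofReal (Real.exp ε) * ∏ i, g i (X i ω) := by
    intro ω
    have hexp : Real.exp (ε * ((A ω : ℝ) + (∑ i, (F i ω : ℝ)) - (B : ℝ) + 1))
        = Real.exp ε * (Real.exp (ε * ((A ω : ℝ) - (B : ℝ)))
            * ∏ i, Real.exp (ε * (F i ω : ℝ))) := by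
      rw [← Real.exp_sum, ← Real.exp_add, ← Real.exp_add]
      congr 1
      rw [← Finset.mul_sum]
      ring
    rw [hexp, ENNReal.ofReal_mul (Real.exp_pos _).le,
      ENNReal.ofReal_mul (Real.exp_pos _).le,
      ENNReal.ofReal_prod_of_nonneg (fun i _ => (Real.exp_pos _).le),
      Fin.prod_univ_succ]
    simp [hgdef, hXdef]
  -- the integral of the product
  have hprod : ∫⁻ ω, ∏ i, g i (X i ω) ∂μ
      = ∏ i, ∫⁻ ω, g i (X i ω) ∂μ :=
    lintegral_prod_of_iIndepFun' μ _ hGmeas hGindep Finset.univ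
  -- bound the product of the integrals
  have hprodbound : ∏ i, ∫⁻ ω, g i (X i ω) ∂μ
      ≤ ENNReal.ofReal (ε ^ 2 / (Real.exp 1 * d)) * ENNReal.ofReal ρ ^ m := by
    rw [Fin.prod_univ_succ]
    refine mul_le_mul' ?_ ?_
    · simpa [hgdef, hXdef] using hA
    · calc ∏ i : Fin m, ∫⁻ ω, g i.succ (X i.succ ω) ∂μ
          ≤ ∏ _i : Fin m, ENNReal.ofReal ρ := by
            refine Finset.prod_le_prod' fun i _ => ?_
            simpa [hgdef, hXdef] using hF i
        _ = ENNReal.ofReal ρ ^ m := by simp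
  -- pointwise bound by 1 + exp
  have hpt : ∀ ω, ENNReal.ofReal
      (Real.exp (ε * max ((A ω : ℝ) + (∑ i, (F i ω : ℝ)) - (B : ℝ) + 1) 0))
      ≤ 1 + ENNReal.ofReal
        (Real.exp (ε * ((A ω : ℝ) + (∑ i, (F i ω : ℝ)) - (B : ℝ) + 1))) := by
    intro ω
    set x : ℝ := (A ω : ℝ) + (∑ i, (F i ω : ℝ)) - (B : ℝ) + 1
    have hle : Real.exp (ε * max x 0) ≤ 1 + Real.exp (ε * x) := by
      rcases le_total x 0 with h | h
      · rw [max_eq_right h]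
        simp only [mul_zero, Real.exp_zero]
        nlinarith [Real.exp_pos (ε * x)]
      · rw [max_eq_left h]
        nlinarith
    calc ENNReal.ofReal (Real.exp (ε * max x 0))
        ≤ ENNReal.ofReal (1 + Real.exp (ε * x)) := ENNReal.ofReal_le_ofReal hle
      _ = 1 + ENNReal.ofReal (Real.exp (ε * x)) := by
          rw [ENNReal.ofReal_add zero_le_one (Real.exp_pos _).le, ENNReal.ofReal_one]
  -- measurability of the exp integrand
  have hmeasexp : Measurable fun ω => ENNReal.ofReal
      (Real.exp (ε * ((A ω : ℝ) + (∑ i, (F i ω : ℝ)) - (B : ℝ) + 1))) := by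
    have : (fun ω => ENNReal.ofReal
        (Real.exp (ε * ((A ω : ℝ) + (∑ i, (F i ω : ℝ)) - (B : ℝ) + 1))))
        = fun ω => ENNReal.ofReal (Real.exp ε) * ∏ i, g i (X i ω) :=
      funext key
    rw [this]
    exact (Finset.measurable_prod _ fun i _ => hGmeas i).const_mul _
  -- the real-number inequality
  have hexpbound : Real.exp ε * ρ ^ m ≤ Real.exp 1 := by
    have h1 : ρ ≤ Real.exp (ε ^ 2 / d) := by
      have := Real.add_one_le_exp (ε ^ 2 / d)
      linarith
    have h2 : ρ ^ m ≤ Real.exp (ε ^ 2 / d) ^ m := pow_le_pow_left₀ hρ0.le h1 m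
    have h3 : Real.exp (ε ^ 2 / d) ^ m = Real.exp (m * (ε ^ 2 / d)) :=
      (Real.exp_nat_mul _ m).symm
    have h4 : (m : ℝ) * (ε ^ 2 / d) ≤ ε ^ 2 := by
      rw [mul_div_assoc']
      rw [div_le_iff₀ hd']
      have : (m:ℝ) ≤ d := by exact_mod_cast hm
      nlinarith [sq_nonneg ε]
    calc Real.exp ε * ρ ^ m ≤ Real.exp ε * Real.exp (ε ^ 2) := by
          refine mul_le_mul_of_nonneg_left ?_ (Real.exp_pos _).le
          exact h2.trans (by rw [h3]; exact Real.exp_le_exp.2 h4)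
      _ = Real.exp (ε + ε ^ 2) := (Real.exp_add _ _).symm
      _ ≤ Real.exp 1 := Real.exp_le_exp.2 (by nlinarith)
  have hfinreal : Real.exp ε * (ε ^ 2 / (Real.exp 1 * d) * ρ ^ m) ≤ ε ^ 2 / d := by
    have hc : 0 ≤ ε ^ 2 / (Real.exp 1 * d) := by positivity
    calc Real.exp ε * (ε ^ 2 / (Real.exp 1 * d) * ρ ^ m)
        = (Real.exp ε * ρ ^ m) * (ε ^ 2 / (Real.exp 1 * d)) := by ring
      _ ≤ Real.exp 1 * (ε ^ 2 / (Real.exp 1 * d)) :=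
          mul_le_mul_of_nonneg_right hexpbound hc
      _ = ε ^ 2 / d := by
          field_simp
  -- main chain
  calc ∫⁻ ω, ENNReal.ofReal
        (Real.exp (ε * max ((A ω : ℝ) + (∑ i, (F i ω : ℝ)) - (B : ℝ) + 1) 0)) ∂μ
      ≤ ∫⁻ ω, (1 + ENNReal.ofReal
        (Real.exp (ε * ((A ω : ℝ) + (∑ i, (F i ω : ℝ)) - (B : ℝ) + 1)))) ∂μ :=
        lintegral_mono hpt
    _ = 1 + ∫⁻ ω, ENNReal.ofReal
        (Real.exp (ε * ((A ω : ℝ) + (∑ i, (F i ω : ℝ)) - (B : ℝ) + 1))) ∂μ := by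
        rw [lintegral_add_left measurable_const, lintegral_const, measure_univ, mul_one]
    _ = 1 + ENNReal.ofReal (Real.exp ε) * ∏ i, ∫⁻ ω, g i (X i ω) ∂μ := by
        rw [lintegral_congr key, lintegral_const_mul _ (Finset.measurable_prod _ fun i _ => hGmeas i), hprod]
    _ ≤ 1 + ENNReal.ofReal (Real.exp ε) *
        (ENNReal.ofReal (ε ^ 2 / (Real.exp 1 * d)) * ENNReal.ofReal ρ ^ m) := by
        exact add_le_add_right (mul_le_mul_right hprodbound _) 1
    _ = 1 + ENNReal.ofReal (Real.exp ε * (ε ^ 2 / (Real.exp 1 * d) * ρ ^ m)) := by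
        rw [← ENNReal.ofReal_pow hρ0.le, ← ENNReal.ofReal_mul (by positivity),
          ← ENNReal.ofReal_mul (Real.exp_pos _).le]
    _ ≤ 1 + ENNReal.ofReal (ε ^ 2 / d) := by
        exact add_le_add_right (ENNReal.ofReal_le_ofReal hfinreal) 1
    _ = ENNReal.ofReal (1 + ε ^ 2 / d) := by
        rw [ENNReal.ofReal_add zero_le_one (by positivity), ENNReal.ofReal_one]
end

section
/- Let ε ∈ (0, 1/2] and let B > 0 be a real number. Let X_1, …, X_m be mutually independent Bernoulli random variables with P(X_j = 1) = p_j, and suppose Σ_{j=1}^m p_j ≤ (1 − ε)B. Let A = Σ_{j=1}^m X_j. Then E[exp(ε(A − B))] ≤ exp(−ε² B / 4). -/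
open MeasureTheory ProbabilityTheory

lemma key_analysis (ε : ℝ) (h0 : 0 < ε) (h : ε ≤ 1/2) :
    (Real.exp ε - 1) * (1 - ε) - ε ≤ -(ε^2)/4 := by
  have hb := Real.exp_bound' h0.le (by linarith) (n := 3) (by norm_num)
  have hsum : ∑ m ∈ Finset.range 3, ε ^ m / m.factorial = 1 + ε + ε^2/2 := by
    norm_num [Finset.sum_range_succ, Nat.factorial]
  rw [hsum] at hb
  norm_num [Nat.factorial] at hb
  nlinarith [sq_nonneg ε, pow_pos h0 3]


/-- Let `ε ∈ (0, 1/2]` and `B > 0` real. If `X_1, …, X_m` are mutually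
independent Bernoulli random variables with `P(X_j = 1) = p_j` and `Σ_j p_j ≤ (1 − ε)B`,
then with `A = Σ_j X_j` we have `E[exp(ε(A − B))] ≤ exp(−ε² B / 4)`. -/
theorem mgf_excess_bernoulli_sum_le
    {Ω : Type*} [MeasurableSpace Ω] (μ : Measure Ω) [IsProbabilityMeasure μ]
    (ε B : ℝ) (hε0 : 0 < ε) (hε : ε ≤ 1 / 2) (hB : 0 < B)
    (m : ℕ) (p : Fin m → ℝ) (hp : ∀ j, p j ∈ Set.Icc (0 : ℝ) 1)
    (hsum : ∑ j, p j ≤ (1 - ε) * B)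
    (X : Fin m → Ω → ℝ) (hXmeas : ∀ j, Measurable (X j))
    (hX01 : ∀ j ω, X j ω = 0 ∨ X j ω = 1)
    (hXp : ∀ j, μ {ω | X j ω = 1} = ENNReal.ofReal (p j))
    (hindep : iIndepFun X μ) :
    ∫⁻ ω, ENNReal.ofReal (Real.exp (ε * ((∑ j, X j ω) - B))) ∂μ ≤
      ENNReal.ofReal (Real.exp (-(ε ^ 2) * B / 4)) := by
  set c : ℝ := Real.exp ε - 1 with hc
  have hc0 : 0 ≤ c := by
    have := Real.add_one_le_exp ε; simp [hc]; linarith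
  -- pointwise identity
  have hpt : ∀ j ω, Real.exp (ε * X j ω) = 1 + c * X j ω := by
    intro j ω
    rcases hX01 j ω with h | h <;> simp [h, hc]
  -- integrability of X j
  have hXint : ∀ j, Integrable (X j) μ := by
    intro j
    refine Integrable.mono' (integrable_const 1) (hXmeas j).aestronglyMeasurable ?_
    filter_upwards with ω
    rcases hX01 j ω with h | h <;> simp [h]
  -- integral of X j
  have hXintegral : ∀ j, ∫ ω, X j ω ∂μ = p j := by
    intro j
    have hset : MeasurableSet {ω | X j ω = 1} := (hXmeas j) (measurableSet_singleton 1)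
    have : X j = Set.indicator {ω | X j ω = 1} (fun _ => (1:ℝ)) := by
      ext ω
      rcases hX01 j ω with h | h <;>
        simp [Set.indicator_apply, Set.mem_setOf_eq, h]
    rw [this]
    rw [integral_indicator_const _ hset]
    rw [measureReal_def, hXp j, smul_eq_mul, mul_one, ENNReal.toReal_ofReal (hp j).1]
  -- integrability of exp(ε X j)
  have hexpint : ∀ j, Integrable (fun ω => Real.exp (ε * X j ω)) μ := by
    intro j
    refine ((integrable_const (1:ℝ)).add ((hXint j).const_mul c)).congr ?_
    filter_upwards with ω
    exact (hpt j ω).symm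
  -- mgf of each X j
  have hmgf : ∀ j, mgf (X j) μ ε = 1 + c * p j := by
    intro j
    rw [mgf]
    calc ∫ ω, Real.exp (ε * X j ω) ∂μ = ∫ ω, (1 + c * X j ω) ∂μ := by
          exact integral_congr_ae (Filter.Eventually.of_forall (hpt j))
      _ = 1 + c * p j := by
          rw [integral_add (integrable_const 1) ((hXint j).const_mul c),
            integral_const, integral_const_mul, hXintegral j]
          simp
  -- mgf of the sum
  have hmgfsum : mgf (∑ j, X j) μ ε = ∏ j, (1 + c * p j) := by
    rw [hindep.mgf_sum hXmeas]
    exact Finset.prod_congr rfl fun j _ => hmgf j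
  -- product bound
  have hprod : ∏ j, (1 + c * p j) ≤ Real.exp (c * ((1 - ε) * B)) := by
    calc ∏ j, (1 + c * p j) ≤ ∏ j, Real.exp (c * p j) := by
          refine Finset.prod_le_prod (fun j _ => ?_) (fun j _ => ?_)
          · have := (hp j).1; positivity
          · rw [add_comm]; exact Real.add_one_le_exp (c * p j)
      _ = Real.exp (∑ j, c * p j) := (Real.exp_sum _ _).symm
      _ ≤ Real.exp (c * ((1 - ε) * B)) := by
          rw [Real.exp_le_exp, ← Finset.mul_sum]
          exact mul_le_mul_of_nonneg_left hsum hc0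
  -- integrability of exp(ε ∑ X)
  have hsumint : Integrable (fun ω => Real.exp (ε * (∑ j, X j) ω)) μ :=
    hindep.integrable_exp_mul_sum hXmeas (fun j _ => hexpint j)
  -- the (real) integral in the goal
  have hfun : (fun ω => Real.exp (ε * ((∑ j, X j ω) - B)))
      = fun ω => Real.exp (ε * (∑ j, X j) ω) / Real.exp (ε * B) := by
    ext ω
    rw [← Real.exp_sub, mul_sub]
    simp
  have hint : Integrable (fun ω => Real.exp (ε * ((∑ j, X j ω) - B))) μ := by
    rw [hfun]; exact hsumint.div_const _
  rw [← MeasureTheory.ofReal_integral_eq_lintegral_ofReal hint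
    (Filter.Eventually.of_forall fun ω => (Real.exp_pos _).le)]
  apply ENNReal.ofReal_le_ofReal
  have hIeq : ∫ ω, Real.exp (ε * ((∑ j, X j ω) - B)) ∂μ
      = mgf (∑ j, X j) μ ε / Real.exp (ε * B) := by
    rw [hfun, integral_div]; rfl
  rw [hIeq, hmgfsum]
  rw [div_le_iff₀ (Real.exp_pos _)]
  calc ∏ j, (1 + c * p j) ≤ Real.exp (c * ((1 - ε) * B)) := hprod
    _ ≤ Real.exp (-(ε ^ 2) * B / 4) * Real.exp (ε * B) := by
        rw [← Real.exp_add, Real.exp_le_exp]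
        have hk := key_analysis ε hε0 hε
        have : (c * (1 - ε) - ε) * B ≤ (-(ε^2)/4) * B :=
          mul_le_mul_of_nonneg_right (by rw [hc]; linarith) hB.le
        nlinarith
end

section
/- There exists a universal constant c > 0 with the following property: for every ε ∈ (0, 1/2] and every real B ≥ c·log(1/ε)/ε², if X_1, …, X_m are mutually independent Bernoulli random variables with parameters p_1, …, p_m satisfying Σ_{j=1}^m p_j ≤ (1 − ε)B, and A = Σ_{j=1}^m X_j, then E[exp(ε(A − B))] ≤ ε²/(3e). -/
open MeasureTheory ProbabilityTheory

private lemma exp_le_quad {x : ℝ} (h0 : 0 ≤ x) (h1 : x ≤ 1) :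
    Real.exp x ≤ 1 + x + 3 / 4 * x ^ 2 := by
  have h := Real.exp_bound (by rw [abs_of_nonneg h0]; exact h1) (n := 2) (by norm_num)
  rw [abs_of_nonneg h0] at h
  have h' := (abs_sub_le_iff.1 h).1
  simp [Finset.sum_range_succ, Nat.factorial] at h'
  nlinarith [h']

private lemma final_real_ineq {ε B : ℝ} (hε : 0 < ε) (hε2 : ε ≤ 1 / 2)
    (hB : 40 * Real.log (1 / ε) / ε ^ 2 ≤ B) :
    Real.exp ((Real.exp ε - 1) * ((1 - ε) * B)) * Real.exp (-(ε * B)) ≤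
      ε ^ 2 / (3 * Real.exp 1) := by
  have hlog : Real.log 2 ≤ Real.log (1 / ε) := by
    apply Real.log_le_log (by norm_num)
    rw [le_div_iff₀ hε]; linarith
  have hlogpos : 0 < Real.log (1 / ε) := lt_of_lt_of_le (Real.log_pos (by norm_num)) hlog
  have hBpos : 0 ≤ B := le_trans (by positivity) hB
  rw [← Real.exp_add]
  have hexp : Real.exp ε ≤ 1 + ε + 3 / 4 * ε ^ 2 := exp_le_quad hε.le (by linarith)
  have harg : (Real.exp ε - 1) * ((1 - ε) * B) + -(ε * B) ≤ -(ε ^ 2 / 4) * B := by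
    have h1 : (Real.exp ε - 1) * (1 - ε) - ε ≤ -(ε ^ 2 / 4) := by nlinarith
    have heq : (Real.exp ε - 1) * ((1 - ε) * B) + -(ε * B)
        = ((Real.exp ε - 1) * (1 - ε) - ε) * B := by ring
    rw [heq, show -(ε ^ 2 / 4) * B = (-(ε ^ 2 / 4)) * B from rfl]
    exact mul_le_mul_of_nonneg_right h1 hBpos
  have harg2 : -(ε ^ 2 / 4) * B ≤ Real.log (ε ^ 10) := by
    have hB' : 10 * Real.log (1 / ε) ≤ ε ^ 2 / 4 * B := by
      have hm := mul_le_mul_of_nonneg_left hB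
        (le_of_lt (show (0:ℝ) < ε ^ 2 / 4 by positivity))
      calc 10 * Real.log (1 / ε) = ε ^ 2 / 4 * (40 * Real.log (1 / ε) / ε ^ 2) := by
            field_simp; ring
        _ ≤ ε ^ 2 / 4 * B := hm
    have hlogε : Real.log (ε ^ 10) = -(10 * Real.log (1 / ε)) := by
      rw [Real.log_pow, Real.log_div (by norm_num) hε.ne', Real.log_one]
      push_cast; ring
    rw [hlogε]; linarith
  calc Real.exp ((Real.exp ε - 1) * ((1 - ε) * B) + -(ε * B))
      ≤ Real.exp (Real.log (ε ^ 10)) := Real.exp_le_exp.2 (le_trans harg harg2)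
    _ = ε ^ 10 := Real.exp_log (by positivity)
    _ ≤ ε ^ 2 / (3 * Real.exp 1) := by
        rw [le_div_iff₀ (by positivity)]
        have h8 : ε ^ 8 ≤ 1 / 256 := by
          have := pow_le_pow_left₀ hε.le hε2 8
          norm_num at this; linarith
        have he : Real.exp 1 < 3 := lt_trans Real.exp_one_lt_d9 (by norm_num)
        have key : ε ^ 8 * (3 * Real.exp 1) ≤ 1 := by
          nlinarith [Real.exp_pos 1, pow_nonneg hε.le 8]
        nlinarith [key, pow_nonneg hε.le 2]

/-- There is a universal constant `c > 0` such that for every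
`ε ∈ (0, 1/2]` and every real `B ≥ c·log(1/ε)/ε²`, if `X_1, …, X_m` are mutually
independent Bernoulli random variables with parameters `p_j` satisfying
`Σ_j p_j ≤ (1 − ε)B`, and `A = Σ_j X_j`, then `E[exp(ε(A − B))] ≤ ε²/(3e)`. -/
theorem exists_universal_constant_mgf_bound :
    ∃ c : ℝ, 0 < c ∧
      ∀ (Ω : Type) (_ : MeasurableSpace Ω) (μ : Measure Ω), IsProbabilityMeasure μ →
        ∀ (ε B : ℝ), 0 < ε → ε ≤ 1 / 2 → c * Real.log (1 / ε) / ε ^ 2 ≤ B →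
          ∀ (m : ℕ) (p : Fin m → ℝ), (∀ j, p j ∈ Set.Icc (0 : ℝ) 1) →
            (∑ j, p j) ≤ (1 - ε) * B →
            ∀ (X : Fin m → Ω → ℝ), (∀ j, Measurable (X j)) →
              (∀ j ω, X j ω = 0 ∨ X j ω = 1) →
              (∀ j, μ {ω | X j ω = 1} = ENNReal.ofReal (p j)) →
              iIndepFun X μ →
              ∫⁻ ω, ENNReal.ofReal (Real.exp (ε * ((∑ j, X j ω) - B))) ∂μ ≤
                ENNReal.ofReal (ε ^ 2 / (3 * Real.exp 1)) := by
  refine ⟨40, by norm_num, ?_⟩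
  intro Ω mΩ μ hμ ε B hε hε2 hB m p hp hsum X hXm hX01 hXp hindep
  -- integrability of each X j
  have hXind : ∀ j, X j = Set.indicator {ω | X j ω = 1} (fun _ => (1:ℝ)) := by
    intro j
    funext ω
    rcases hX01 j ω with h | h <;> simp [Set.indicator, h]
  have hSmeas : ∀ j, MeasurableSet {ω | X j ω = 1} := fun j =>
    (hXm j) (measurableSet_singleton 1)
  have hXint : ∀ j, Integrable (X j) μ := by
    intro j
    rw [hXind j]
    rw [integrable_indicator_iff (hSmeas j)]
    exact integrableOn_const (measure_lt_top μ _).ne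
  have hXintegral : ∀ j, ∫ ω, X j ω ∂μ = p j := by
    intro j
    have := integral_indicator_const (1:ℝ) (hSmeas j) (μ := μ)
    rw [hXind j]
    rw [this, measureReal_def, hXp j, smul_eq_mul, mul_one, ENNReal.toReal_ofReal (hp j).1]
  -- compute mgf of each X j
  have hexpeq : ∀ j ω, Real.exp (ε * X j ω) = 1 + (Real.exp ε - 1) * X j ω := by
    intro j ω
    rcases hX01 j ω with h | h <;> simp [h]
  have hmgf : ∀ j, mgf (X j) μ ε = 1 + (Real.exp ε - 1) * p j := by
    intro j
    unfold mgf
    simp_rw [hexpeq j]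
    rw [integral_add (integrable_const 1) ((hXint j).const_mul _),
      integral_const, integral_const_mul, hXintegral j]
    simp
  -- the integrand is integrable
  have hf_meas : Measurable fun ω => Real.exp (ε * ((∑ j, X j ω) - B)) := by
    apply Real.measurable_exp.comp
    apply Measurable.const_mul
    exact (Finset.measurable_sum _ fun j _ => hXm j).sub measurable_const
  have hf_bound : ∀ ω, ‖Real.exp (ε * ((∑ j, X j ω) - B))‖ ≤ Real.exp (ε * (m - B)) := by
    intro ω
    rw [Real.norm_eq_abs, abs_of_pos (Real.exp_pos _)]
    apply Real.exp_le_exp.2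
    apply mul_le_mul_of_nonneg_left _ hε.le
    have : (∑ j, X j ω) ≤ (m : ℝ) := by
      calc (∑ j, X j ω) ≤ ∑ _j : Fin m, (1:ℝ) := by
            apply Finset.sum_le_sum
            intro j _
            rcases hX01 j ω with h | h <;> simp [h]
        _ = m := by simp
    linarith
  have hf_int : Integrable (fun ω => Real.exp (ε * ((∑ j, X j ω) - B))) μ :=
    Integrable.mono' (integrable_const _) hf_meas.aestronglyMeasurable
      (Filter.Eventually.of_forall hf_bound)
  -- convert lintegral to integral
  rw [← ofReal_integral_eq_lintegral_ofReal hf_int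
      (Filter.Eventually.of_forall fun ω => (Real.exp_pos _).le)]
  apply ENNReal.ofReal_le_ofReal
  -- split the exponential
  have hsplit : (fun ω => Real.exp (ε * ((∑ j, X j ω) - B)))
      = fun ω => Real.exp (ε * (∑ j, X j) ω) * Real.exp (-(ε * B)) := by
    funext ω
    rw [← Real.exp_add, Finset.sum_apply]
    ring_nf
  rw [hsplit, integral_mul_const]
  have hmgfsum : ∫ ω, Real.exp (ε * (∑ j, X j) ω) ∂μ = ∏ j, mgf (X j) μ ε := by
    have := hindep.mgf_sum hXm Finset.univ (t := ε)
    unfold mgf at this ⊢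
    exact this
  rw [hmgfsum]
  -- bound the product
  have hfac_nonneg : ∀ j, (0:ℝ) ≤ mgf (X j) μ ε := by
    intro j
    rw [hmgf j]
    have h1 : (1:ℝ) ≤ Real.exp ε := Real.one_le_exp hε.le
    nlinarith [(hp j).1, (hp j).2]
  have hprod_le : (∏ j, mgf (X j) μ ε) ≤ Real.exp ((Real.exp ε - 1) * ((1 - ε) * B)) := by
    calc (∏ j, mgf (X j) μ ε) ≤ ∏ j, Real.exp ((Real.exp ε - 1) * p j) := by
          apply Finset.prod_le_prod (fun j _ => hfac_nonneg j)
          intro j _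
          rw [hmgf j, add_comm]
          exact Real.add_one_le_exp _
      _ = Real.exp (∑ j, (Real.exp ε - 1) * p j) := by rw [Real.exp_sum]
      _ ≤ Real.exp ((Real.exp ε - 1) * ((1 - ε) * B)) := by
          apply Real.exp_le_exp.2
          rw [← Finset.mul_sum]
          apply mul_le_mul_of_nonneg_left _ (by nlinarith [Real.one_le_exp hε.le])
          exact hsum
  calc (∏ j, mgf (X j) μ ε) * Real.exp (-(ε * B))
      ≤ Real.exp ((Real.exp ε - 1) * ((1 - ε) * B)) * Real.exp (-(ε * B)) :=
        mul_le_mul_of_nonneg_right hprod_le (Real.exp_pos _).le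
    _ ≤ ε ^ 2 / (3 * Real.exp 1) := final_real_ineq hε hε2 hB
end

section
/- Let p : ℤ → ℝ and t ∈ ℤ. Suppose the left parent ℓ(t) and the right parent r(t) both exist. Then either ℓ(r(t)) exists and ℓ(r(t)) = ℓ(t), or r(ℓ(t)) exists and r(ℓ(t)) = r(t). -/
/-- `s` is the left parent of `t` for prices `p`: the greatest `s < t` with `p s ≤ p t`. -/
def IsLeftParent (p : ℤ → ℝ) (t s : ℤ) : Prop :=
  s < t ∧ p s ≤ p t ∧ ∀ s', s' < t → p s' ≤ p t → s' ≤ s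

/-- `s` is the right parent of `t` for prices `p`: the least `s > t` with `p s < p t`. -/
def IsRightParent (p : ℤ → ℝ) (t s : ℤ) : Prop :=
  t < s ∧ p s < p t ∧ ∀ s', t < s' → p s' < p t → s ≤ s'

/-- If both the left parent `ℓ(t)` and the right parent `r(t)` of `t`
exist, then either `ℓ(r(t))` exists and equals `ℓ(t)`, or `r(ℓ(t))` exists and equals
`r(t)`. -/
theorem leftParent_rightParent_compat (p : ℤ → ℝ) (t l r : ℤ)
    (hl : IsLeftParent p t l) (hr : IsRightParent p t r) :
    IsLeftParent p r l ∨ IsRightParent p l r := by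
  obtain ⟨hlt, hple, hlmax⟩ := hl
  obtain ⟨htr, hprl, hrmin⟩ := hr
  by_cases h : p l ≤ p r
  · left
    refine ⟨hlt.trans htr, h, fun s' hs' hps' => ?_⟩
    rcases lt_trichotomy s' t with h1 | h1 | h1
    · exact hlmax s' h1 (hps'.trans hprl.le)
    · exact absurd (h1 ▸ hps') (not_le.mpr hprl)
    · exact absurd (hrmin s' h1 (lt_of_le_of_lt hps' hprl)) (not_le.mpr hs')
  · right
    push_neg at h
    refine ⟨hlt.trans htr, h, fun s' hs' hps' => ?_⟩
    by_contra hc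
    push_neg at hc
    rcases lt_trichotomy s' t with h1 | h1 | h1
    · exact absurd (hlmax s' h1 (hps'.le.trans hple)) (not_le.mpr hs')
    · exact absurd (h1 ▸ hps') (not_lt.mpr hple)
    · exact absurd (hrmin s' h1 (hps'.trans_le hple)) (not_le.mpr hc)
end

section
/- Let p : ℤ → ℝ and t ∈ ℤ, and suppose the ancestor set C(t) is finite. Then C(t) is totally ordered by ancestry: for all t₁, t₂ ∈ C(t), either t₁ ∈ C(t₂) or t₂ ∈ C(t₁). -/
/-- There is a forward edge from `s` to `t` if `s` is the left or the right parent of `t`. -/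
def FwdEdge (p : ℤ → ℝ) (s t : ℤ) : Prop :=
  IsLeftParent p t s ∨ IsRightParent p t s

/-- The ancestor set `C(t)`: all `s` from which `t` is reachable by forward edges. -/
def AncestorSet (p : ℤ → ℝ) (t : ℤ) : Set ℤ :=
  {s | Relation.ReflTransGen (FwdEdge p) s t}

/-- Reachability by a path of length at most `n` (tail-recursive form). -/
def ReachLe (p : ℤ → ℝ) : ℕ → ℤ → ℤ → Prop
  | 0, x, y => x = y
  | n+1, x, y => x = y ∨ ∃ a, ReachLe p n x a ∧ FwdEdge p a y

lemma reachLe_succ {p : ℤ → ℝ} : ∀ {n x y}, ReachLe p n x y → ReachLe p (n+1) x y := by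
  intro n
  induction n with
  | zero => intro x y h; exact Or.inl h
  | succ n IH =>
    intro x y h
    rcases h with h | ⟨a, ha, hae⟩
    · exact Or.inl h
    · exact Or.inr ⟨a, IH ha, hae⟩

lemma reachLe_of_rtg {p : ℤ → ℝ} {x y : ℤ} (h : Relation.ReflTransGen (FwdEdge p) x y) :
    ∃ n, ReachLe p n x y := by
  induction h with
  | refl => exact ⟨0, rfl⟩
  | tail _ he IH =>
    obtain ⟨n, hn⟩ := IH
    exact ⟨n + 1, Or.inr ⟨_, hn, he⟩⟩

lemma rtg_of_reachLe {p : ℤ → ℝ} : ∀ {n x y}, ReachLe p n x y →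
    Relation.ReflTransGen (FwdEdge p) x y := by
  intro n
  induction n with
  | zero => intro x y h; exact h ▸ Relation.ReflTransGen.refl
  | succ n IH =>
    intro x y h
    rcases h with h | ⟨a, ha, hae⟩
    · exact h ▸ Relation.ReflTransGen.refl
    · exact Relation.ReflTransGen.tail (IH ha) hae

/-- A left parent and a right parent of the same node are joined by an edge. -/
lemma leftParent_rightParent_edge {p : ℤ → ℝ} {z a b : ℤ}
    (ha : IsLeftParent p z a) (hb : IsRightParent p z b) :
    FwdEdge p a b ∨ FwdEdge p b a := by
  obtain ⟨haz, hpa, hamax⟩ := ha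
  obtain ⟨hzb, hpb, hbmin⟩ := hb
  by_cases hab : p a ≤ p b
  · -- `a` is the left parent of `b`
    left; left
    refine ⟨haz.trans hzb, hab, ?_⟩
    intro s' hs'b hps'
    by_contra hgt
    push_neg at hgt
    rcases lt_trichotomy s' z with h1 | h1 | h1
    · exact absurd (hamax s' h1 (hps'.trans hpb.le)) (not_le.mpr hgt)
    · subst h1; exact absurd (hps'.trans_lt hpb) (lt_irrefl _)
    · exact absurd (hbmin s' h1 (hps'.trans_lt hpb)) (not_le.mpr hs'b)
  · -- `b` is the right parent of `a`
    push_neg at hab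
    right; right
    refine ⟨haz.trans hzb, hab, ?_⟩
    intro s' has' hps'
    by_contra hlt
    push_neg at hlt
    rcases lt_trichotomy s' z with h1 | h1 | h1
    · exact absurd (hamax s' h1 ((hps'.trans_le hpa).le)) (not_le.mpr has')
    · subst h1; exact absurd (hps'.trans_le hpa) (lt_irrefl _)
    · exact absurd (hbmin s' h1 (hps'.trans_le hpa)) (not_le.mpr hlt)

/-- Two parents of the same node are equal or joined by an edge. -/
lemma parents_comparable {p : ℤ → ℝ} {z a b : ℤ}
    (ha : FwdEdge p a z) (hb : FwdEdge p b z) :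
    a = b ∨ FwdEdge p a b ∨ FwdEdge p b a := by
  rcases ha with ha | ha <;> rcases hb with hb | hb
  · exact Or.inl (le_antisymm (hb.2.2 a ha.1 ha.2.1) (ha.2.2 b hb.1 hb.2.1))
  · exact Or.inr (leftParent_rightParent_edge ha hb)
  · exact Or.inr ((leftParent_rightParent_edge hb ha).symm)
  · exact Or.inl (le_antisymm (ha.2.2 b hb.1 hb.2.1) (hb.2.2 a ha.1 ha.2.1))

lemma reach_comparable (p : ℤ → ℝ) :
    ∀ k m n x y z, m + n ≤ k → ReachLe p m x z → ReachLe p n y z →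
      Relation.ReflTransGen (FwdEdge p) x y ∨ Relation.ReflTransGen (FwdEdge p) y x := by
  intro k
  induction k using Nat.strong_induction_on with
  | _ k IH =>
    intro m n x y z hk hx hy
    -- decompose the path of x
    match m, hx with
    | 0, hx =>
      subst hx
      exact Or.inr (rtg_of_reachLe hy)
    | m'+1, hx =>
      rcases hx with rfl | ⟨a, hxa, hae⟩
      · exact Or.inr (rtg_of_reachLe hy)
      · match n, hy with
        | 0, hy =>
          subst hy
          exact Or.inl (rtg_of_reachLe hx)
        | n'+1, hy =>
          rcases hy with rfl | ⟨b, hyb, hbe⟩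
          · exact Or.inl (rtg_of_reachLe (n := m'+1) (Or.inr ⟨a, hxa, hae⟩))
          · rcases parents_comparable hae hbe with rfl | hedge | hedge
            · -- common parent: recurse with shorter paths to `a`
              exact IH (m' + n') (by omega) m' n' x y a (le_refl _) hxa hyb
            · -- edge a → b
              exact IH (m' + 1 + n') (by omega) (m' + 1) n' x y b (le_refl _)
                (Or.inr ⟨a, hxa, hedge⟩) hyb
            · -- edge b → a
              exact IH (m' + (n' + 1)) (by omega) m' (n' + 1) x y a (le_refl _)
                hxa (Or.inr ⟨b, hyb, hedge⟩)

/-- If the ancestor set `C(t)` is finite, it is totally ordered by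
ancestry: for all `t₁, t₂ ∈ C(t)`, either `t₁ ∈ C(t₂)` or `t₂ ∈ C(t₁)`. -/
theorem ancestorSet_total_order (p : ℤ → ℝ) (t : ℤ)
    (hfin : (AncestorSet p t).Finite) :
    ∀ t₁ ∈ AncestorSet p t, ∀ t₂ ∈ AncestorSet p t,
      t₁ ∈ AncestorSet p t₂ ∨ t₂ ∈ AncestorSet p t₁ := by
  intro t₁ h₁ t₂ h₂
  obtain ⟨m, hm⟩ := reachLe_of_rtg h₁
  obtain ⟨n, hn⟩ := reachLe_of_rtg h₂
  exact reach_comparable p (m + n) m n t₁ t₂ t (le_refl _) hm hn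
end

section
/- Fix a horizon H ≥ 1, a finite set J of jobs where job j has start s_j, deadline d_j, length l_j ≥ 1 with 1 ≤ s_j ≤ d_j − l_j + 1 and d_j ≤ H, value v_j ≥ 0, and probability q_j ∈ [0, 1], and capacities B_t ∈ ℕ for t ∈ {1, …, H}. Then OPT is at most the optimal value of the linear program: maximize Σ_{j ∈ J} Σ_{t ∈ W_j} v_j q_j x_{j,t} over x_{j,t} ∈ [0, 1] subject to Σ_{t ∈ W_j} x_{j,t} ≤ 1 for every j ∈ J, and Σ_{j ∈ J} Σ_{t' ∈ [t − l_j + 1, t] ∩ W_j} q_j x_{j,t'} ≤ B_t for every t ∈ {1, …, H}. -/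
/-- The window of starting times of a job with start `sj`, deadline `dj` and length `lj`:
`{sj, …, dj − lj + 1}`. -/
def window (sj dj lj : ℕ) : Finset ℕ := Finset.Icc sj (dj + 1 - lj)

/-- `IsSchedule H s d l Bcap R Asub start` : the jobs of `Asub ⊆ R` are scheduled with
starting times `start` inside their windows, and at every slot `t ∈ {1, …, H}` the number
of scheduled jobs `j` with `start j ∈ [t − l j + 1, t]` is at most `Bcap t`. -/
def IsSchedule {J : Type*} [DecidableEq J] (H : ℕ) (s d l : J → ℕ) (Bcap : ℕ → ℕ)
    (R Asub : Finset J) (start : J → ℕ) : Prop :=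
  Asub ⊆ R ∧ (∀ j ∈ Asub, start j ∈ window (s j) (d j) (l j)) ∧
    ∀ t ∈ Finset.Icc 1 H,
      (Asub.filter (fun j => start j ∈ Finset.Icc (t + 1 - l j) t)).card ≤ Bcap t

/-- The maximum value of a feasible schedule of the realized set `R` of jobs. -/
noncomputable def maxVal {J : Type*} [DecidableEq J] (H : ℕ) (s d l : J → ℕ)
    (v : J → ℝ) (Bcap : ℕ → ℕ) (R : Finset J) : ℝ :=
  sSup {w : ℝ | ∃ (Asub : Finset J) (start : J → ℕ),
    IsSchedule H s d l Bcap R Asub start ∧ w = ∑ j ∈ Asub, v j}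

/-- `OPT`: the expectation, over independent realizations in which job `j` is present with
probability `q j`, of the maximum value of a feasible schedule of the realized jobs. -/
noncomputable def OPTval {J : Type*} [Fintype J] [DecidableEq J] (H : ℕ)
    (s d l : J → ℕ) (v q : J → ℝ) (Bcap : ℕ → ℕ) : ℝ :=
  ∑ R : Finset J, (∏ j ∈ R, q j) * (∏ j ∈ Rᶜ, (1 - q j)) * maxVal H s d l v Bcap R

/-- The optimal value of the expected-case LP: maximize
`Σ_j Σ_{t ∈ W_j} v_j q_j x_{j,t}` over `x_{j,t} ∈ [0, 1]` subject to
`Σ_{t ∈ W_j} x_{j,t} ≤ 1` for every `j` and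
`Σ_j Σ_{t' ∈ [t−l_j+1, t] ∩ W_j} q_j x_{j,t'} ≤ B_t` for every `t ∈ {1, …, H}`. -/
noncomputable def LPval {J : Type*} [Fintype J] (H : ℕ) (s d l : J → ℕ)
    (v q : J → ℝ) (Bcap : ℕ → ℕ) : ℝ :=
  sSup {w : ℝ | ∃ x : J → ℕ → ℝ,
    (∀ j t, 0 ≤ x j t ∧ x j t ≤ 1) ∧
    (∀ j, ∑ t ∈ window (s j) (d j) (l j), x j t ≤ 1) ∧
    (∀ t ∈ Finset.Icc 1 H,
      ∑ j, ∑ t' ∈ Finset.Icc (t + 1 - l j) t ∩ window (s j) (d j) (l j), q j * x j t'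
        ≤ (Bcap t : ℝ)) ∧
    w = ∑ j, ∑ t ∈ window (s j) (d j) (l j), v j * q j * x j t}

/- ### Auxiliary lemmas -/

lemma sum_powerset_prob {J : Type*} [DecidableEq J] (q : J → ℝ) (s : Finset J) :
    ∑ R ∈ s.powerset, (∏ j ∈ R, q j) * (∏ j ∈ s \ R, (1 - q j)) = 1 := by
  rw [← Finset.prod_add]; simp

lemma marginal_prob {J : Type*} [Fintype J] [DecidableEq J] (q : J → ℝ) (j : J) :
    ∑ R : Finset J, (if j ∈ R then (∏ i ∈ R, q i) * (∏ i ∈ Rᶜ, (1 - q i)) else 0)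
      = q j := by
  classical
  have hins : insert j ((Finset.univ : Finset J).erase j) = Finset.univ :=
    Finset.insert_erase (Finset.mem_univ j)
  have hnot : j ∉ (Finset.univ : Finset J).erase j := Finset.notMem_erase j _
  have h0 : ∑ R : Finset J, (if j ∈ R then (∏ i ∈ R, q i) * (∏ i ∈ Rᶜ, (1 - q i)) else 0)
      = ∑ R ∈ (insert j ((Finset.univ : Finset J).erase j)).powerset,
          (if j ∈ R then (∏ i ∈ R, q i) * (∏ i ∈ Rᶜ, (1 - q i)) else 0) := by
    rw [hins, Finset.powerset_univ]
  rw [h0, Finset.sum_powerset_insert hnot]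
  have h1 : ∑ R ∈ ((Finset.univ : Finset J).erase j).powerset,
      (if j ∈ R then (∏ i ∈ R, q i) * (∏ i ∈ Rᶜ, (1 - q i)) else 0) = 0 := by
    apply Finset.sum_eq_zero
    intro R hR
    have : j ∉ R := fun h => hnot (Finset.mem_powerset.1 hR h)
    simp [this]
  rw [h1, zero_add]
  have h2 : ∀ R ∈ ((Finset.univ : Finset J).erase j).powerset,
      (if j ∈ insert j R then (∏ i ∈ insert j R, q i) * (∏ i ∈ (insert j R)ᶜ, (1 - q i)) else 0)
      = q j * ((∏ i ∈ R, q i) * (∏ i ∈ (Finset.univ : Finset J).erase j \ R, (1 - q i))) := by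
    intro R hR
    have hjR : j ∉ R := fun h => hnot (Finset.mem_powerset.1 hR h)
    have hc : (insert j R)ᶜ = (Finset.univ : Finset J).erase j \ R := by
      ext i
      simp only [Finset.mem_compl, Finset.mem_insert, Finset.mem_erase, Finset.mem_sdiff,
        Finset.mem_univ, true_and, and_true]
      tauto
    rw [if_pos (Finset.mem_insert_self j R), Finset.prod_insert hjR, hc, mul_assoc]
  rw [Finset.sum_congr rfl h2, ← Finset.mul_sum, sum_powerset_prob, mul_one]

lemma maxVal_attained {J : Type*} [Fintype J] [DecidableEq J] (H : ℕ) (s d l : J → ℕ)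
    (v : J → ℝ) (Bcap : ℕ → ℕ) (R : Finset J) :
    ∃ (Asub : Finset J) (start : J → ℕ), IsSchedule H s d l Bcap R Asub start ∧
      maxVal H s d l v Bcap R = ∑ j ∈ Asub, v j := by
  classical
  set S := {w : ℝ | ∃ (Asub : Finset J) (start : J → ℕ),
    IsSchedule H s d l Bcap R Asub start ∧ w = ∑ j ∈ Asub, v j} with hS
  have hne : S.Nonempty := by
    refine ⟨0, ∅, s, ⟨Finset.empty_subset _, by simp, by simp⟩, by simp⟩
  have hfin : S.Finite := by
    apply Set.Finite.subset (Set.finite_range (fun A : Finset J => ∑ j ∈ A, v j))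
    rintro w ⟨Asub, stf, _, rfl⟩
    exact ⟨Asub, rfl⟩
  have hmem : sSup S ∈ S := hne.csSup_mem hfin
  obtain ⟨Asub, stf, h1, h2⟩ := hmem
  exact ⟨Asub, stf, h1, h2⟩

/-- For any horizon `H ≥ 1`, finite job set `J` (with starts, deadlines,
lengths, values, probabilities as stated) and capacities `B`, the expected offline optimum
`OPT` is at most the optimal value of the expected-case LP. -/
theorem opt_le_lp
    {J : Type*} [Fintype J] [DecidableEq J] (H : ℕ) (hH : 1 ≤ H)
    (s d l : J → ℕ) (v q : J → ℝ) (Bcap : ℕ → ℕ)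
    (hl : ∀ j, 1 ≤ l j) (hs : ∀ j, 1 ≤ s j)
    (hwin : ∀ j, s j + l j ≤ d j + 1) (hd : ∀ j, d j ≤ H)
    (hv : ∀ j, 0 ≤ v j) (hq : ∀ j, q j ∈ Set.Icc (0 : ℝ) 1) :
    OPTval H s d l v q Bcap ≤ LPval H s d l v q Bcap := by
  classical
  set p : Finset J → ℝ := fun R => (∏ j ∈ R, q j) * (∏ j ∈ Rᶜ, (1 - q j)) with hp
  have hp0 : ∀ R, 0 ≤ p R := fun R =>
    mul_nonneg (Finset.prod_nonneg fun i _ => (hq i).1)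
      (Finset.prod_nonneg fun i _ => by linarith [(hq i).2])
  have hpsum : (∑ R : Finset J, p R) = 1 := by
    rw [← Finset.powerset_univ]
    simpa [hp, Finset.compl_eq_univ_sdiff] using sum_powerset_prob q (Finset.univ : Finset J)
  have hmarg : ∀ j, ∑ R : Finset J, (if j ∈ R then p R else 0) = q j := fun j =>
    marginal_prob q j
  -- choose optimal schedules
  choose A st hsch hval using fun R => maxVal_attained H s d l v Bcap R
  -- indicator of "j scheduled at time t in realization R"
  set ind : Finset J → J → ℕ → ℝ :=
    fun R j t => if j ∈ A R ∧ st R j = t then 1 else 0 with hind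
  have hind0 : ∀ R j t, 0 ≤ ind R j t := by
    intro R j t; simp only [hind]; split <;> norm_num
  have hind_sum : ∀ (R : Finset J) (j : J) (T : Finset ℕ),
      ∑ t ∈ T, ind R j t = if j ∈ A R ∧ st R j ∈ T then 1 else 0 := by
    intro R j T
    by_cases hj : j ∈ A R
    · simp only [hind, hj, true_and]
      exact Finset.sum_ite_eq T (st R j) (fun _ => 1)
    · simp [hind, hj]
  set y : J → ℕ → ℝ := fun j t => ∑ R : Finset J, p R * ind R j t with hy
  have hy0 : ∀ j t, 0 ≤ y j t := fun j t =>
    Finset.sum_nonneg fun R _ => mul_nonneg (hp0 R) (hind0 R j t)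
  have hysum_eq : ∀ (j : J) (T : Finset ℕ),
      ∑ t ∈ T, y j t
        = ∑ R : Finset J, p R * (if j ∈ A R ∧ st R j ∈ T then 1 else 0) := by
    intro j T
    simp only [hy]
    rw [Finset.sum_comm]
    exact Finset.sum_congr rfl fun R _ => by rw [← Finset.mul_sum, hind_sum]
  have hysum_le : ∀ (j : J) (T : Finset ℕ), ∑ t ∈ T, y j t ≤ q j := by
    intro j T
    rw [hysum_eq, ← hmarg j]
    apply Finset.sum_le_sum
    intro R _
    by_cases h : j ∈ A R ∧ st R j ∈ T
    · rw [if_pos h, mul_one, if_pos ((hsch R).1 h.1)]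
    · rw [if_neg h, mul_zero]
      split <;> [exact hp0 R; exact le_refl 0]
  have hyq : ∀ j t, y j t ≤ q j := fun j t => by
    simpa using hysum_le j {t}
  set x : J → ℕ → ℝ := fun j t => if q j = 0 then 0 else y j t / q j with hx
  have hqx : ∀ j t, q j * x j t = y j t := by
    intro j t
    by_cases h : q j = 0
    · have h1 := hyq j t
      have h2 := hy0 j t
      simp only [hx, h, if_pos, mul_zero]
      rw [h] at h1
      linarith
    · simp only [hx, if_neg h]
      field_simp
  have hx01 : ∀ j t, 0 ≤ x j t ∧ x j t ≤ 1 := by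
    intro j t
    by_cases h : q j = 0
    · simp [hx, h]
    · have hqpos : 0 < q j := lt_of_le_of_ne (hq j).1 (Ne.symm h)
      constructor
      · simp only [hx, if_neg h]
        exact div_nonneg (hy0 j t) hqpos.le
      · simp only [hx, if_neg h]
        exact div_le_one_of_le₀ (hyq j t) hqpos.le
  have hxwin : ∀ j, ∑ t ∈ window (s j) (d j) (l j), x j t ≤ 1 := by
    intro j
    by_cases h : q j = 0
    · simp [hx, h]
    · have hqpos : 0 < q j := lt_of_le_of_ne (hq j).1 (Ne.symm h)
      have he : ∑ t ∈ window (s j) (d j) (l j), x j t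
          = (∑ t ∈ window (s j) (d j) (l j), y j t) / q j := by
        simp only [hx, if_neg h, Finset.sum_div]
      rw [he]
      exact div_le_one_of_le₀ (hysum_le j _) hqpos.le
  -- capacity constraint
  have hcap : ∀ t ∈ Finset.Icc 1 H,
      ∑ j, ∑ t' ∈ Finset.Icc (t + 1 - l j) t ∩ window (s j) (d j) (l j), q j * x j t'
        ≤ (Bcap t : ℝ) := by
    intro t ht
    have hcount : ∀ R : Finset J,
        (∑ j, (if j ∈ A R ∧ st R j ∈ Finset.Icc (t + 1 - l j) t ∩ window (s j) (d j) (l j)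
          then (1 : ℝ) else 0)) ≤ (Bcap t : ℝ) := by
      intro R
      rw [Finset.sum_boole]
      have hsub : Finset.univ.filter
            (fun j => j ∈ A R ∧ st R j ∈ Finset.Icc (t + 1 - l j) t ∩ window (s j) (d j) (l j))
          ⊆ (A R).filter (fun j => st R j ∈ Finset.Icc (t + 1 - l j) t) := by
        intro j hj
        simp only [Finset.mem_filter, Finset.mem_univ, true_and, Finset.mem_inter] at hj ⊢
        exact ⟨hj.1, hj.2.1⟩
      have h1 : (Finset.univ.filter
            (fun j => j ∈ A R ∧ st R j ∈ Finset.Icc (t + 1 - l j) t ∩ window (s j) (d j) (l j))).card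
          ≤ Bcap t := le_trans (Finset.card_le_card hsub) ((hsch R).2.2 t ht)
      exact_mod_cast h1
    calc ∑ j, ∑ t' ∈ Finset.Icc (t + 1 - l j) t ∩ window (s j) (d j) (l j), q j * x j t'
        = ∑ j, ∑ t' ∈ Finset.Icc (t + 1 - l j) t ∩ window (s j) (d j) (l j), y j t' := by
          exact Finset.sum_congr rfl fun j _ => Finset.sum_congr rfl fun t' _ => hqx j t'
      _ = ∑ j, ∑ R : Finset J, p R *
            (if j ∈ A R ∧ st R j ∈ Finset.Icc (t + 1 - l j) t ∩ window (s j) (d j) (l j)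
              then 1 else 0) := Finset.sum_congr rfl fun j _ => hysum_eq j _
      _ = ∑ R : Finset J, p R * ∑ j,
            (if j ∈ A R ∧ st R j ∈ Finset.Icc (t + 1 - l j) t ∩ window (s j) (d j) (l j)
              then 1 else 0) := by
          rw [Finset.sum_comm]
          exact Finset.sum_congr rfl fun R _ => (Finset.mul_sum _ _ _).symm
      _ ≤ ∑ R : Finset J, p R * (Bcap t : ℝ) := Finset.sum_le_sum fun R _ =>
          mul_le_mul_of_nonneg_left (hcount R) (hp0 R)
      _ = (Bcap t : ℝ) := by rw [← Finset.sum_mul, hpsum, one_mul]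
  -- objective = OPT
  have hobj : ∑ j, ∑ t ∈ window (s j) (d j) (l j), v j * q j * x j t
      = OPTval H s d l v q Bcap := by
    have step1 : ∀ j, ∑ t ∈ window (s j) (d j) (l j), v j * q j * x j t
        = v j * ∑ R : Finset J, p R * (if j ∈ A R then 1 else 0) := by
      intro j
      have : ∑ t ∈ window (s j) (d j) (l j), v j * q j * x j t
          = v j * ∑ t ∈ window (s j) (d j) (l j), y j t := by
        rw [Finset.mul_sum]
        exact Finset.sum_congr rfl fun t _ => by rw [mul_assoc, hqx]
      rw [this, hysum_eq]
      congr 1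
      apply Finset.sum_congr rfl
      intro R _
      congr 1
      by_cases h : j ∈ A R
      · simp [h, (hsch R).2.1 j h]
      · simp [h]
    calc ∑ j, ∑ t ∈ window (s j) (d j) (l j), v j * q j * x j t
        = ∑ j, v j * ∑ R : Finset J, p R * (if j ∈ A R then 1 else 0) :=
          Finset.sum_congr rfl fun j _ => step1 j
      _ = ∑ R : Finset J, p R * ∑ j ∈ A R, v j := by
          simp_rw [Finset.mul_sum]
          rw [Finset.sum_comm]
          refine Finset.sum_congr rfl fun R _ => ?_
          have hterm : ∀ j, v j * (p R * if j ∈ A R then 1 else 0)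
              = if j ∈ A R then p R * v j else 0 := by
            intro j; by_cases h : j ∈ A R <;> simp [h] <;> ring
          simp_rw [hterm, Finset.sum_ite_mem, Finset.univ_inter]
      _ = OPTval H s d l v q Bcap := by
          rw [OPTval]
          exact Finset.sum_congr rfl fun R _ => by rw [hval R, hp]
  -- bounded above
  have hbdd : BddAbove {w : ℝ | ∃ x : J → ℕ → ℝ,
      (∀ j t, 0 ≤ x j t ∧ x j t ≤ 1) ∧
      (∀ j, ∑ t ∈ window (s j) (d j) (l j), x j t ≤ 1) ∧
      (∀ t ∈ Finset.Icc 1 H,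
        ∑ j, ∑ t' ∈ Finset.Icc (t + 1 - l j) t ∩ window (s j) (d j) (l j), q j * x j t'
          ≤ (Bcap t : ℝ)) ∧
      w = ∑ j, ∑ t ∈ window (s j) (d j) (l j), v j * q j * x j t} := by
    refine ⟨∑ j, v j * q j, ?_⟩
    rintro w ⟨x', hx01', hwin', _, rfl⟩
    apply Finset.sum_le_sum
    intro j _
    rw [← Finset.mul_sum]
    exact mul_le_of_le_one_right (mul_nonneg (hv j) (hq j).1) (hwin' j)
  rw [← hobj, LPval]
  exact le_csSup hbdd ⟨x, hx01, hxwin, hcap, rfl⟩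
end
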